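/- arXiv:1410.1653 — 7 statements merged into one kernel-verified Lean document; each statement's English description precedes it below -/
import Mathlib

section
/- In any good orientation of a dual-critical graph, the resulting digraph is rooted connected with the source as root; that is, there is a directed path from the source to every other vertex. -/
variable {V : Type*}

/-- An orientation of a simple graph: a relation choosing a direction for each edge. -/
def IsOrientation (G : SimpleGraph V) (r : V → V → Prop) : Prop :=
  (∀ u v, G.Adj u v ↔ (r u v ∨ r v u)) ∧ ∀ u v, r u v → ¬ r v u

/-- A relation is acyclic if it has no directed cycle. -/
def AcyclicRel (r : V → V → Prop) : Prop := ∀ v, ¬ Relation.TransGen r v v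

/-- Indegree of a vertex in an orientation. -/
noncomputable def inDeg (r : V → V → Prop) (v : V) : ℕ := {u | r u v}.ncard

/-- Dual-critical: there is an acyclic orientation in which all vertices except one
have odd indegree. -/
def DualCritical (G : SimpleGraph V) : Prop :=
  ∃ r : V → V → Prop, IsOrientation G r ∧ AcyclicRel r ∧
    ∃ s : V, ∀ v : V, v ≠ s → Odd (inDeg r v)

/-- Dual-critical via a good ordering: an enumeration of all vertices such that every
vertex except the first has an odd number of neighbours among its predecessors. -/
def DualCriticalOrd (G : SimpleGraph V) : Prop :=
  ∃ (n : ℕ) (e : Fin n ≃ V), ∀ i : Fin n, 0 < i.val →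
    Odd ({j : Fin n | j < i ∧ G.Adj (e j) (e i)}.ncard)

/-- Number of edges between two (disjoint) vertex sets. -/
noncomputable def cut (G : SimpleGraph V) (A B : Set V) : ℕ :=
  {p : V × V | p.1 ∈ A ∧ p.2 ∈ B ∧ G.Adj p.1 p.2}.ncard

/-- A good `k`-partition: an ordered partition into nonempty classes such that each class
after the first is joined to the union of the previous ones by an odd number of edges. -/
def GoodPartition (G : SimpleGraph V) {k : ℕ} (P : Fin k → Set V) : Prop :=
  (∀ i, (P i).Nonempty) ∧ Pairwise (Function.onFun Disjoint P) ∧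
  (⋃ i, P i) = Set.univ ∧
  ∀ i : Fin k, 0 < i.val → Odd (cut G (⋃ j ∈ {j : Fin k | j < i}, P j) (P i))

def KDualCritical (G : SimpleGraph V) (k : ℕ) : Prop :=
  ∃ P : Fin k → Set V, GoodPartition G P

noncomputable def maxdc (G : SimpleGraph V) : ℕ := sSup {k | KDualCritical G k}

/-- A `T`-odd orientation: vertices in `T` have odd indegree, others even. -/
def TOdd (r : V → V → Prop) (T : Set V) : Prop :=
  ∀ v, (v ∈ T → Odd (inDeg r v)) ∧ (v ∉ T → Even (inDeg r v))

/-- Super-dual-critical: deleting any vertex leaves a dual-critical graph. -/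
def SuperDualCritical (G : SimpleGraph V) : Prop :=
  ∀ v : V, DualCriticalOrd (G.induce ({v}ᶜ : Set V))

theorem stmt2 [Fintype V] (G : SimpleGraph V) (r : V → V → Prop)
    (hor : IsOrientation G r) (hac : AcyclicRel r) (s : V)
    (hsource : inDeg r s = 0) (hodd : ∀ v : V, v ≠ s → Odd (inDeg r v)) :
    ∀ v : V, Relation.ReflTransGen r s v := by
  have hwf : WellFounded r := by
    have ht : IsTrans V (Relation.TransGen r) := ⟨fun a b c => Relation.TransGen.trans⟩
    have hi : IsIrrefl V (Relation.TransGen r) := ⟨hac⟩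
    have hw := Finite.wellFounded_of_trans_of_irrefl (Relation.TransGen r)
    exact Subrelation.wf (fun h => Relation.TransGen.single h) hw
  intro v
  induction v using hwf.induction with
  | _ v ih =>
    by_cases hv : v = s
    · subst hv; exact .refl
    · have hod := hodd v hv
      have hne : {u | r u v}.Nonempty := Set.nonempty_of_ncard_ne_zero (by
        intro h; rw [inDeg, h] at hod; simp at hod)
      obtain ⟨u, hu⟩ := hne
      exact (ih u hu).tail hu
end

section
/- If a graph G is dual-critical, then for every vertex v of G there is an acyclic orientation in which all vertices except v have odd indegree. -/
variable {V : Type*}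

section DCAux

open scoped Classical in
/-- Number of neighbours of `x` in the list `xs`. -/
noncomputable def cntAdj (G : SimpleGraph V) (x : V) (xs : List V) : ℕ :=
  xs.countP (fun z => decide (G.Adj x z))

/-- `ok G d c` : in the *deletion order* `d` (reverse of the building order), every
vertex `x` has `c x` = parity of the number of its neighbours deleted after it
(= its earlier neighbours in the building order). -/
def ok (G : SimpleGraph V) : List V → (V → Bool) → Prop
  | [], _ => True
  | x :: xs, c => (c x = Nat.bodd (cntAdj G x xs)) ∧ ok G xs c

/-- Orientation induced by a deletion order: an edge points towards the vertex that is
deleted earlier (i.e. comes later in the building order). -/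
def orient (G : SimpleGraph V) : List V → V → V → Prop
  | [] => fun _ _ => False
  | x :: xs => fun a b => (b = x ∧ a ∈ xs ∧ G.Adj a b) ∨ orient G xs a b

lemma bodd_iff_odd (n : ℕ) : Nat.bodd n = true ↔ Odd n := by
  rw [Nat.odd_iff]
  cases h : n.bodd <;> simp [Nat.mod_two_of_bodd, h]

lemma orient_mem {G : SimpleGraph V} {d : List V} {a b : V} (h : orient G d a b) :
    a ∈ d ∧ b ∈ d := by
  induction d with
  | nil => exact h.elim
  | cons x xs ih =>
    rcases h with ⟨hb, ha, _⟩ | h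
    · exact ⟨List.mem_cons_of_mem _ ha, by rw [hb]; exact List.mem_cons_self⟩
    · exact ⟨List.mem_cons_of_mem _ (ih h).1, List.mem_cons_of_mem _ (ih h).2⟩

lemma orient_adj {G : SimpleGraph V} {d : List V} {a b : V} (h : orient G d a b) :
    G.Adj a b := by
  induction d with
  | nil => exact h.elim
  | cons x xs ih => rcases h with ⟨_, _, h⟩ | h; exact h; exact ih h

lemma orient_asymm {G : SimpleGraph V} {d : List V} (hd : d.Nodup) {a b : V}
    (h : orient G d a b) : ¬ orient G d b a := by
  induction d with
  | nil => exact h.elim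
  | cons x xs ih =>
    have hx : x ∉ xs := (List.nodup_cons.mp hd).1
    have hnd : xs.Nodup := (List.nodup_cons.mp hd).2
    rcases h with ⟨hb, ha, _⟩ | h
    · rintro (⟨ha', hb', _⟩ | h')
      · exact hx (ha' ▸ ha)
      · exact hx (hb ▸ (orient_mem h').1)
    · rintro (⟨ha', hb', _⟩ | h')
      · exact hx (ha' ▸ (orient_mem h).1)
      · exact ih hnd h h'

lemma orient_total {G : SimpleGraph V} {d : List V} {a b : V}
    (ha : a ∈ d) (hb : b ∈ d) (hadj : G.Adj a b) :
    orient G d a b ∨ orient G d b a := by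
  induction d with
  | nil => exact absurd ha (List.not_mem_nil)
  | cons x xs ih =>
    have hab : a ≠ b := hadj.ne
    rcases List.mem_cons.mp ha with rfl | ha'
    · rcases List.mem_cons.mp hb with rfl | hb'
      · exact absurd rfl hab
      · exact Or.inr (Or.inl ⟨rfl, hb', hadj.symm⟩)
    · rcases List.mem_cons.mp hb with rfl | hb'
      · exact Or.inl (Or.inl ⟨rfl, ha', hadj⟩)
      · rcases ih ha' hb' with h | h
        · exact Or.inl (Or.inr h)
        · exact Or.inr (Or.inr h)

lemma orient_transGen {G : SimpleGraph V} {x : V} {xs : List V} (hx : x ∉ xs) {a b : V}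
    (h : Relation.TransGen (orient G (x :: xs)) a b) :
    Relation.TransGen (orient G xs) a b ∨ b = x := by
  induction h with
  | single h =>
    rcases h with ⟨hb, _, _⟩ | h
    · exact Or.inr hb
    · exact Or.inl (Relation.TransGen.single h)
  | tail _ h2 ih =>
    rename_i b' c _
    rcases ih with ih | rfl
    · rcases h2 with ⟨hb, _, _⟩ | h2
      · exact Or.inr hb
      · exact Or.inl (ih.tail h2)
    · -- step out of x : impossible
      exfalso
      rcases h2 with ⟨_, ha, _⟩ | h2
      · exact hx ha
      · exact hx (orient_mem h2).1

lemma transGen_exists_first {r : V → V → Prop} {a b : V}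
    (h : Relation.TransGen r a b) : ∃ c, r a c := by
  induction h with
  | single h => exact ⟨_, h⟩
  | tail _ _ ih => exact ih

lemma orient_acyclic {G : SimpleGraph V} {d : List V} (hd : d.Nodup) :
    AcyclicRel (orient G d) := by
  induction d with
  | nil =>
    intro v hv
    obtain ⟨c, hstep⟩ := transGen_exists_first hv
    exact hstep
  | cons x xs ih =>
    have hx : x ∉ xs := (List.nodup_cons.mp hd).1
    have hnd : xs.Nodup := (List.nodup_cons.mp hd).2
    intro v hv
    rcases orient_transGen hx hv with h | rfl
    · exact ih hnd v h
    · obtain ⟨c, hstep⟩ := transGen_exists_first hv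
      rcases hstep with ⟨_, ha, _⟩ | h
      · exact hx ha
      · exact hx (orient_mem h).1

open scoped Classical in
lemma indeg_orient_head {G : SimpleGraph V} {x : V} {xs : List V} (hx : x ∉ xs)
    (hnd : xs.Nodup) :
    inDeg (orient G (x :: xs)) x = cntAdj G x xs := by
  have hset : {a | orient G (x :: xs) a x} = ↑((xs.filter (fun z => decide (G.Adj x z))).toFinset) := by
    ext a
    simp only [Set.mem_setOf_eq, Finset.coe_sort_coe, List.coe_toFinset, List.mem_filter,
      List.mem_toFinset]
    constructor
    · rintro (⟨_, ha, hadj⟩ | h)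
      · exact ⟨ha, decide_eq_true hadj.symm⟩
      · exact absurd (orient_mem h).2 hx
    · rintro ⟨ha, hadj⟩
      exact Or.inl ⟨rfl, ha, (of_decide_eq_true hadj).symm⟩
  rw [inDeg, hset, Set.ncard_coe_finset]
  rw [List.toFinset_card_of_nodup (hnd.filter _)]
  rw [cntAdj, List.countP_eq_length_filter]

lemma indeg_orient_tail {G : SimpleGraph V} {x : V} {xs : List V} {u : V} (hu : u ≠ x) :
    inDeg (orient G (x :: xs)) u = inDeg (orient G xs) u := by
  unfold inDeg
  congr 1
  ext a
  simp only [Set.mem_setOf_eq]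
  constructor
  · rintro (⟨hb, _, _⟩ | h)
    · exact absurd hb hu
    · exact h
  · exact fun h => Or.inr h

/-- From `ok` we can read off indegree parities of the induced orientation. -/
lemma ok_indeg {G : SimpleGraph V} {d : List V} (hd : d.Nodup) {c : V → Bool}
    (hok : ok G d c) : ∀ u ∈ d, c u = Nat.bodd (inDeg (orient G d) u) := by
  induction d with
  | nil => intro u hu; exact absurd hu (List.not_mem_nil)
  | cons x xs ih =>
    have hx : x ∉ xs := (List.nodup_cons.mp hd).1
    have hnd : xs.Nodup := (List.nodup_cons.mp hd).2
    intro u hu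
    rcases List.mem_cons.mp hu with rfl | hu'
    · rw [indeg_orient_head hx hnd]; exact hok.1
    · have hux : u ≠ x := fun h => hx (h ▸ hu')
      rw [indeg_orient_tail hux]
      exact ih hnd hok.2 u hu'

lemma indeg_getLast {G : SimpleGraph V} {d : List V} (hd : d.Nodup) (hne : d ≠ []) :
    inDeg (orient G d) (d.getLast hne) = 0 := by
  induction d with
  | nil => exact absurd rfl hne
  | cons x xs ih =>
    have hx : x ∉ xs := (List.nodup_cons.mp hd).1
    have hnd : xs.Nodup := (List.nodup_cons.mp hd).2
    rcases eq_or_ne xs [] with rfl | hxs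
    · have : {a | orient G [x] a x} = ∅ := by
        ext a
        simp only [Set.mem_setOf_eq, Set.mem_empty_iff_false, iff_false]
        rintro (⟨_, ha, _⟩ | h)
        · exact List.not_mem_nil ha
        · exact h
      simp [inDeg, List.getLast, this]
    · have hlast : (x :: xs).getLast hne = xs.getLast hxs := List.getLast_cons hxs
      have hmem : xs.getLast hxs ∈ xs := List.getLast_mem hxs
      have hux : xs.getLast hxs ≠ x := fun h => hx (h ▸ hmem)
      rw [hlast, indeg_orient_tail hux]
      exact ih hnd hxs

lemma ok_congr {G : SimpleGraph V} {d : List V} {c c' : V → Bool}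
    (h : ∀ z ∈ d, c z = c' z) (hok : ok G d c) : ok G d c' := by
  induction d with
  | nil => trivial
  | cons x xs ih =>
    refine ⟨?_, ih (fun z hz => h z (List.mem_cons_of_mem _ hz)) hok.2⟩
    rw [← h x (List.mem_cons_self)]
    exact hok.1

open scoped Classical in
lemma cntAdj_perm {G : SimpleGraph V} {l l' : List V} (h : l.Perm l') (x : V) :
    cntAdj G x l = cntAdj G x l' := h.countP_eq _

open scoped Classical in
lemma cntAdj_append {G : SimpleGraph V} (x u : V) (l : List V) :
    cntAdj G x (l ++ [u]) = cntAdj G x l + cntAdj G x [u] := by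
  simp [cntAdj, List.countP_append]

open scoped Classical in
/-- Appending `u` at the very end of the deletion order (= making `u` the first vertex of
the building order). -/
lemma ok_append {G : SimpleGraph V} (u : V) :
    ∀ (l : List V) (c : V → Bool),
      ok G l (fun z => xor (c z) (decide (G.Adj u z))) → c u = false → ok G (l ++ [u]) c := by
  intro l
  induction l with
  | nil =>
    intro c _ hcu
    refine ⟨?_, trivial⟩
    simp [cntAdj, hcu]
  | cons x xs ih =>
    intro c hok hcu
    refine ⟨?_, ih c hok.2 hcu⟩
    show c x = Nat.bodd (cntAdj G x (xs ++ [u]))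
    have h1 : xor (c x) (decide (G.Adj u x)) = Nat.bodd (cntAdj G x xs) := hok.1
    have h2 : cntAdj G x (xs ++ [u]) = cntAdj G x xs + cntAdj G x [u] := cntAdj_append x u xs
    rw [h2, Nat.bodd_add]
    have h3 : Nat.bodd (cntAdj G x [u]) = decide (G.Adj x u) := by
      simp only [cntAdj, List.countP_cons, List.countP_nil]
      cases h : decide (G.Adj x u) <;> simp [h]
    rw [h3, ← h1]

    have hcomm : decide (G.Adj u x) = decide (G.Adj x u) := by
      simp [G.adj_comm]
    rw [hcomm]
    cases c x <;> cases h : decide (G.Adj x u) <;> simp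

open scoped Classical in
lemma countP_xor (p q : V → Bool) :
    ∀ l : List V, Nat.bodd (l.countP (fun z => xor (p z) (q z)))
      = xor (Nat.bodd (l.countP p)) (Nat.bodd (l.countP q)) := by
  intro l
  induction l with
  | nil => simp
  | cons x xs ih =>
    simp only [List.countP_cons]
    cases hp : p x <;> cases hq : q x <;>
      simp [hp, hq, Nat.bodd_add, ih, Bool.xor_assoc, Bool.xor_comm, Bool.xor_left_comm]

open scoped Classical in
/-- The main combinatorial lemma: given a witness deletion order for a dual-critical graph
(with building-first vertex `s`), every parity target `c` of the right total parity is
realizable by some deletion order of the same vertices. -/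
lemma main_lemma {G : SimpleGraph V} :
    ∀ (d : List V) (s : V) (c : V → Bool), d.Nodup →
      (∀ hne : d ≠ [], d.getLast hne = s) →
      ok G d (fun z => decide (z ≠ s)) →
      Nat.bodd (d.countP c) = Nat.bodd (d.countP (fun z => decide (z ≠ s))) →
      ∃ d', d'.Perm d ∧ ok G d' c := by
  intro d
  induction d with
  | nil => intro s c _ _ _ _; exact ⟨[], List.Perm.refl _, trivial⟩
  | cons u xs ih =>
    intro s c hnd hlast hok hpar
    have hx : u ∉ xs := (List.nodup_cons.mp hnd).1
    have hndxs : xs.Nodup := (List.nodup_cons.mp hnd).2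
    rcases eq_or_ne xs [] with rfl | hxs
    · -- singleton
      have hs : u = s := hlast (by simp)
      subst hs
      have hcu : c u = false := by
        cases h : c u
        · rfl
        · exfalso
          simp [List.countP_cons, h, List.countP_nil] at hpar
      exact ⟨[u], List.Perm.refl _, ⟨by simp [cntAdj, hcu], trivial⟩⟩
    · -- xs nonempty
      have hsxs : xs.getLast hxs = s := by
        have := hlast (by simp)
        rwa [List.getLast_cons hxs] at this
      have hsmem : s ∈ xs := hsxs ▸ List.getLast_mem hxs
      have hus : u ≠ s := fun h => hx (h ▸ hsmem)
      have hbu : (decide (u ≠ s) : Bool) = true := by simp [hus]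
      have hcnt : Nat.bodd (cntAdj G u xs) = true := by
        simpa [hus] using hok.1.symm
      have hlast' : ∀ hne : xs ≠ [], xs.getLast hne = s := fun _ => hsxs
      have hparcons : ∀ (p : V → Bool),
          Nat.bodd ((u :: xs).countP p) = xor (p u) (Nat.bodd (xs.countP p)) := by
        intro p
        simp only [List.countP_cons]
        cases h : p u <;> simp [h, Nat.bodd_add]
      rw [hparcons c, hparcons (fun z => decide (z ≠ s)), hbu] at hpar
      cases hc : c u
      · -- c u = false : put u first in the building order, i.e. last in deletion order
        set c' : V → Bool := fun z => xor (c z) (decide (G.Adj u z)) with hc'def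
        have hpar' : Nat.bodd (xs.countP c') = Nat.bodd (xs.countP (fun z => decide (z ≠ s))) := by
          have h1 : Nat.bodd (xs.countP c')
              = xor (Nat.bodd (xs.countP c)) (Nat.bodd (xs.countP (fun z => decide (G.Adj u z)))) :=
            countP_xor c (fun z => decide (G.Adj u z)) xs
          have h2 : Nat.bodd (xs.countP (fun z => decide (G.Adj u z))) = true := hcnt
          rw [h1, h2]
          rw [hc] at hpar
          simp only [Bool.false_xor, Bool.true_xor] at hpar
          rw [hpar]
          simp
        obtain ⟨xs', hperm, hok'⟩ := ih s c' hndxs hlast' hok.2 hpar'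
        refine ⟨xs' ++ [u], ?_, ?_⟩
        · exact (List.perm_append_singleton u xs').trans (hperm.cons u)
        · exact ok_append u xs' c hok' hc
      · -- c u = true : keep u first in the deletion order
        have hpar' : Nat.bodd (xs.countP c) = Nat.bodd (xs.countP (fun z => decide (z ≠ s))) := by
          rw [hc] at hpar
          simpa using hpar
        obtain ⟨xs', hperm, hok'⟩ := ih s c hndxs hlast' hok.2 hpar'
        refine ⟨u :: xs', hperm.cons u, ⟨?_, hok'⟩⟩
        rw [hc, cntAdj_perm hperm, hcnt]

end DCAux

section DCAux2

lemma orient_rel_of_pairwise {G : SimpleGraph V} {t : V → V → Prop} :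
    ∀ {d : List V}, List.Pairwise t d → ∀ {a b : V}, orient G d a b → t b a := by
  intro d
  induction d with
  | nil => intro _ a b h; exact h.elim
  | cons x xs ih =>
    intro hpw a b h
    have hhead := (List.pairwise_cons.mp hpw).1
    have htail := (List.pairwise_cons.mp hpw).2
    rcases h with ⟨hb, ha, _⟩ | h
    · exact hb ▸ hhead a ha
    · exact ih htail h

open scoped Classical in
lemma ok_of_indeg {G : SimpleGraph V} :
    ∀ {d : List V}, d.Nodup → ok G d (fun u => Nat.bodd (inDeg (orient G d) u)) := by
  intro d
  induction d with
  | nil => intro _; trivial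
  | cons x xs ih =>
    intro hd
    have hx : x ∉ xs := (List.nodup_cons.mp hd).1
    have hnd : xs.Nodup := (List.nodup_cons.mp hd).2
    refine ⟨?_, ?_⟩
    · show Nat.bodd (inDeg (orient G (x :: xs)) x) = Nat.bodd (cntAdj G x xs)
      rw [indeg_orient_head hx hnd]
    refine ok_congr (c := fun u => Nat.bodd (inDeg (orient G xs) u)) ?_ (ih hnd)
    intro z hz
    have hzx : z ≠ x := fun h => hx (h ▸ hz)
    rw [indeg_orient_tail hzx]

open scoped Classical in
lemma countP_ne_of_nodup {d : List V} (hnd : d.Nodup) {w : V} (hw : w ∈ d) :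
    d.countP (fun z => decide (z ≠ w)) + 1 = d.length := by
  induction d with
  | nil => exact absurd hw (List.not_mem_nil)
  | cons x xs ih =>
    have hx : x ∉ xs := (List.nodup_cons.mp hnd).1
    have hnds : xs.Nodup := (List.nodup_cons.mp hnd).2
    rcases List.mem_cons.mp hw with rfl | hw'
    · have hall : xs.countP (fun z => decide (z ≠ w)) = xs.length :=
        List.countP_eq_length.mpr (fun z hz => decide_eq_true (fun h => hx (h ▸ hz)))
      simp only [List.countP_cons, hall, List.length_cons]
      simp
    · have hxw : x ≠ w := fun h => hx (h ▸ hw')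
      have hih := ih hnds hw'
      simp only [List.countP_cons, List.length_cons]
      have hx1 : (if (decide (x ≠ w) : Bool) = true then 1 else 0) = 1 := by simp [hxw]
      omega

end DCAux2

theorem stmt3 [Fintype V] (G : SimpleGraph V) (h : DualCritical G) :
    ∀ v : V, ∃ r : V → V → Prop, IsOrientation G r ∧ AcyclicRel r ∧
      ∀ u : V, u ≠ v → Odd (inDeg r u) := by
  classical
  intro v
  obtain ⟨r, hor, hacy, s, hodd⟩ := h
  -- Build a partial order whose strict part contains r
  set pr : V → V → Prop := fun a b => a = b ∨ Relation.TransGen r a b with hprdef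
  haveI hpr : IsPartialOrder V pr :=
    { refl := fun a => Or.inl rfl
      trans := by
        rintro a b c (rfl | hab) (rfl | hbc)
        · exact Or.inl rfl
        · exact Or.inr hbc
        · exact Or.inr hab
        · exact Or.inr (hab.trans hbc)
      antisymm := by
        intro a b h1 h2
        rcases h1 with rfl | hab
        · rfl
        rcases h2 with rfl | hba
        · rfl
        exact absurd (hab.trans hba) (hacy a) }
  obtain ⟨lin, hlin, hsub⟩ := extend_partialOrder pr
  haveI := hlin
  -- descending order
  set t : V → V → Prop := fun a b => lin b a with htdef
  haveI : IsTrans V t := ⟨fun a b c h1 h2 => IsTrans.trans (r := lin) c b a h2 h1⟩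
  haveI : IsAntisymm V t := ⟨fun a b h1 h2 => Std.Antisymm.antisymm (r := lin) a b h2 h1⟩
  haveI : IsTotal V t := ⟨fun a b => (Std.Total.total (r := lin) a b).symm⟩
  haveI : DecidableRel t := fun a b => Classical.propDecidable _
  set d : List V := Finset.univ.sort t with hddef
  have hdnodup : d.Nodup := Finset.sort_nodup Finset.univ t
  have hdmem : ∀ a : V, a ∈ d := fun a => (Finset.mem_sort t).mpr (Finset.mem_univ a)
  have hdpw : List.Pairwise t d := Finset.pairwise_sort Finset.univ t
  have hdne : d ≠ [] := List.ne_nil_of_mem (hdmem v)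
  -- r coincides with the orientation induced by d
  have hriff : ∀ a b, r a b ↔ orient G d a b := by
    intro a b
    constructor
    · intro hr
      have hadj : G.Adj a b := (hor.1 a b).mpr (Or.inl hr)
      have hab : a ≠ b := by
        rintro rfl
        exact hacy a (Relation.TransGen.single hr)
      have hlinab : lin a b := hsub a b (Or.inr (Relation.TransGen.single hr))
      rcases orient_total (hdmem a) (hdmem b) hadj with ho | ho
      · exact ho
      · have : lin b a := orient_rel_of_pairwise hdpw ho
        exact absurd (Std.Antisymm.antisymm (r := lin) a b hlinab this) hab
    · intro ho
      have hadj : G.Adj a b := orient_adj ho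
      rcases (hor.1 a b).mp hadj with hr | hr
      · exact hr
      · exfalso
        have hadj' : G.Adj b a := hadj.symm
        have hba : b ≠ a := hadj'.ne
        have hlinba : lin b a := hsub b a (Or.inr (Relation.TransGen.single hr))
        rcases orient_total (hdmem b) (hdmem a) hadj' with ho' | ho'
        · exact orient_asymm hdnodup ho ho'
        · have : lin a b := orient_rel_of_pairwise hdpw ho'
          exact hba (Std.Antisymm.antisymm (r := lin) b a hlinba this)
  have hindeg : ∀ u, inDeg r u = inDeg (orient G d) u := by
    intro u
    unfold inDeg
    congr 1
    ext a
    exact hriff a u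
  -- s is the last element of d
  have hslast : ∀ hne : d ≠ [], d.getLast hne = s := by
    intro hne
    by_contra hns
    have h0 : inDeg (orient G d) (d.getLast hne) = 0 := indeg_getLast hdnodup hne
    have := hodd _ hns
    rw [hindeg, h0] at this
    exact ((Nat.not_odd_iff_even).mpr Even.zero) this
  -- ok for the base parity vector
  have hokb : ok G d (fun z => decide (z ≠ s)) := by
    refine ok_congr ?_ (ok_of_indeg hdnodup)
    intro z _
    rcases eq_or_ne z s with rfl | hzs
    · have hz : z = d.getLast hdne := (hslast hdne).symm
      rw [hz, indeg_getLast hdnodup hdne]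
      simp
    · have : Odd (inDeg (orient G d) z) := by
        rw [← hindeg]; exact hodd z hzs
      rw [(bodd_iff_odd _).mpr this]
      simp [hzs]
  -- parity of the target vector matches
  have hpar : Nat.bodd (d.countP (fun z => decide (z ≠ v)))
      = Nat.bodd (d.countP (fun z => decide (z ≠ s))) := by
    have h1 := countP_ne_of_nodup hdnodup (hdmem v)
    have h2 := countP_ne_of_nodup hdnodup (hdmem s)
    have : d.countP (fun z => decide (z ≠ v)) = d.countP (fun z => decide (z ≠ s)) := by omega
    rw [this]
  obtain ⟨d', hperm, hok'⟩ := main_lemma d s (fun z => decide (z ≠ v)) hdnodup hslast hokb hpar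
  have hd'nodup : d'.Nodup := hperm.nodup_iff.mpr hdnodup
  have hd'mem : ∀ a : V, a ∈ d' := fun a => hperm.mem_iff.mpr (hdmem a)
  refine ⟨orient G d', ⟨?_, ?_⟩, orient_acyclic hd'nodup, ?_⟩
  · intro a b
    constructor
    · intro hadj
      exact orient_total (hd'mem a) (hd'mem b) hadj
    · rintro (ho | ho)
      · exact orient_adj ho
      · exact (orient_adj ho).symm
  · intro a b hab
    exact orient_asymm hd'nodup hab
  · intro u huv
    have := ok_indeg hd'nodup hok' u (hd'mem u)
    have hu : (decide (u ≠ v) : Bool) = true := by simp [huv]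
    rw [hu] at this
    exact (bodd_iff_odd _).mp this.symm
end

section
/- Every dual-critical graph with at least one vertex has good parity; that is, the number of vertices and the number of edges have different parity. -/
variable {V : Type*}

theorem stmt4 [Fintype V] (G : SimpleGraph V) (h : DualCritical G) :
    ¬ (Fintype.card V % 2 = G.edgeSet.ncard % 2) := by
  classical
  obtain ⟨r, ⟨hadj, hanti⟩, hacyc, s, hodd⟩ := h
  set d : V → ℕ := fun v => (Finset.univ.filter fun u => r u v).card with hd
  have hdeg : ∀ v, inDeg r v = d v := by
    intro v
    rw [inDeg, Set.ncard_eq_toFinset_card']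
    congr 1
    ext u
    simp [hd]
  -- well-foundedness: minimal element m
  have htrans : IsTrans V (Relation.TransGen r) := ⟨fun _ _ _ => Relation.TransGen.trans⟩
  have hirr : IsIrrefl V (Relation.TransGen r) := ⟨hacyc⟩
  have hwf : WellFounded (Relation.TransGen r) :=
    Finite.wellFounded_of_trans_of_irrefl _
  obtain ⟨m, -, hm⟩ := hwf.has_min Set.univ ⟨s, trivial⟩
  have hm0 : d m = 0 := by
    rw [Finset.card_eq_zero]
    ext u
    simp only [Finset.mem_filter, Finset.mem_univ, true_and, Finset.notMem_empty, iff_false]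
    exact fun hu => hm u trivial (Relation.TransGen.single hu)
  have hms : m = s := by
    by_contra hne
    have := hodd m hne
    rw [hdeg, hm0] at this
    simp [Nat.odd_iff] at this
  subst hms
  -- edge count equals sum of indegrees
  have hE : G.edgeSet.ncard = ∑ v, d v := by
    rw [Set.ncard_eq_toFinset_card']
    have hcard : (Finset.univ.filter fun p : V × V => r p.1 p.2).card = ∑ v, d v := by
      rw [Finset.card_eq_sum_card_fiberwise (f := Prod.snd) (t := Finset.univ)
        (fun p _ => Finset.mem_univ _)]
      refine Finset.sum_congr rfl fun v _ => ?_
      refine Finset.card_bij (fun p _ => p.1) ?_ ?_ ?_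
      · intro p hp
        simp only [Finset.mem_filter, Finset.mem_univ, true_and] at hp ⊢
        rw [← hp.2]; exact hp.1
      · intro p hp q hq hpq
        simp only [Finset.mem_filter, Finset.mem_univ, true_and] at hp hq
        exact Prod.ext hpq (hp.2.trans hq.2.symm)
      · intro u hu
        simp only [Finset.mem_filter, Finset.mem_univ, true_and] at hu
        exact ⟨(u, v), by simp [hu], rfl⟩
    rw [← hcard]
    symm
    refine Finset.card_bij (fun e _ => Sym2.mk e.1 e.2) ?_ ?_ ?_
    · intro p hp
      simp only [Finset.mem_filter, Finset.mem_univ, true_and] at hp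
      simp only [Set.mem_toFinset, SimpleGraph.mem_edgeSet]
      exact (hadj p.1 p.2).2 (Or.inl hp)
    · intro p hp q hq hpq
      simp only [Finset.mem_filter, Finset.mem_univ, true_and] at hp hq
      rw [Sym2.mk_eq_mk_iff] at hpq
      rcases hpq with h1 | h1
      · exact h1
      · exfalso
        rw [Prod.ext_iff] at h1
        simp only [Prod.fst_swap, Prod.snd_swap] at h1
        exact hanti p.1 p.2 hp (by rw [h1.1, h1.2]; exact hq)
    · intro e he
      simp only [Set.mem_toFinset] at he
      induction e with
      | _ a b =>
        rcases (hadj a b).1 he with h1 | h1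
        · exact ⟨(a, b), by simp [h1], rfl⟩
        · exact ⟨(b, a), by simp [h1], Sym2.eq_swap⟩
  -- parity
  have hsum : (∑ v, d v) % 2 = (∑ v, d v % 2) % 2 := (Finset.sum_nat_mod _ _ _)
  have hterm : ∀ v, d v % 2 = if v = m then 0 else 1 := by
    intro v
    by_cases hv : v = m
    · simp [hv, hm0]
    · have := hodd v hv
      rw [hdeg, Nat.odd_iff] at this
      simp [hv, this]
  have hsum2 : (∑ v, d v % 2) = Fintype.card V - 1 := by
    simp only [hterm]
    have h1 : (∑ x : V, if x = m then 0 else 1) =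
        ((Finset.univ.filter (fun x : V => ¬ x = m)).card) := by
      rw [Finset.sum_ite, Finset.sum_const, Finset.sum_const]
      simp
    rw [h1]
    have h2 : (Finset.univ.filter (fun x : V => ¬ x = m)) = Finset.univ.erase m := by
      ext x; simp [Finset.mem_erase, and_comm]
    rw [h2, Finset.card_erase_of_mem (Finset.mem_univ m), Finset.card_univ]
  have hfin : G.edgeSet.ncard % 2 = (Fintype.card V - 1) % 2 := by
    rw [hE, hsum, hsum2]
  have hpos : 0 < Fintype.card V := Fintype.card_pos_iff.2 ⟨m⟩
  omega
end

section
/- A graph G with more than one vertex is dual-critical if and only if its vertex set has a partition into nonempty sets A and B such that the induced subgraphs G[A] and G[B] are dual-critical and the number of edges between A and B is odd. -/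
variable {V : Type*}

lemma dco_congr {W U : Type*} {H : SimpleGraph W} {G : SimpleGraph U} (φ : W ≃ U)
    (hφ : ∀ a b, H.Adj a b ↔ G.Adj (φ a) (φ b)) (h : DualCriticalOrd H) :
    DualCriticalOrd G := by
  obtain ⟨n, e, he⟩ := h
  refine ⟨n, e.trans φ, fun i hi => ?_⟩
  have hs : {j : Fin n | j < i ∧ G.Adj ((e.trans φ) j) ((e.trans φ) i)}
      = {j : Fin n | j < i ∧ H.Adj (e j) (e i)} := by
    ext j; simp [hφ]
  rw [hs]; exact he i hi

lemma ncard_comp_equiv {α β : Type*} (e : α ≃ β) (P : β → Prop) :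
    {a | P (e a)}.ncard = {b | P b}.ncard := by
  have : {b | P b} = e '' {a | P (e a)} := by
    ext b
    constructor
    · intro hb; exact ⟨e.symm b, by simpa using hb, by simp⟩
    · rintro ⟨a, ha, rfl⟩; exact ha
  rw [this, Set.ncard_image_of_injective _ e.injective]

lemma ncard_subtype (S : Set V) (Q : V → Prop) :
    {x : ↥S | Q x.1}.ncard = {u | u ∈ S ∧ Q u}.ncard := by
  have : {u | u ∈ S ∧ Q u} = Subtype.val '' {x : ↥S | Q x.1} := by
    ext u
    constructor
    · rintro ⟨hu, hq⟩; exact ⟨⟨u, hu⟩, hq, rfl⟩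
    · rintro ⟨⟨u, hu⟩, hq, rfl⟩; exact ⟨hu, hq⟩
  rw [this, Set.ncard_image_of_injective _ Subtype.val_injective]

noncomputable def degIn (G : SimpleGraph V) (S : Set V) (v : V) : ℕ :=
  {u | u ∈ S ∧ G.Adj u v}.ncard

lemma dco_insert (G : SimpleGraph V) {S : Set V} {v : V} (hv : v ∉ S)
    (hS : DualCriticalOrd (G.induce S)) (hodd : Odd (degIn G S v)) :
    DualCriticalOrd (G.induce (insert v S)) := by
  obtain ⟨n, e, he⟩ := hS
  set T : Set V := insert v S with hT
  let f : Fin (n + 1) → ↥T := Fin.snoc (fun j => ⟨(e j : V), Set.mem_insert_of_mem _ (e j).2⟩)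
    ⟨v, Set.mem_insert _ _⟩
  have hfc : ∀ j : Fin n, (f j.castSucc : V) = (e j : V) := fun j => by
    simp [f, Fin.snoc_castSucc]
  have hfl : (f (Fin.last n) : V) = v := by simp [f]
  have hvS : ∀ j : Fin n, (e j : V) ≠ v := fun j h => hv (h ▸ (e j).2)
  have hinj : Function.Injective f := by
    intro a b hab
    induction a using Fin.lastCases with
    | last =>
      induction b using Fin.lastCases with
      | last => rfl
      | cast b =>
        exfalso; apply hvS b
        rw [← hfc b, ← hfl, hab]
    | cast a =>
      induction b using Fin.lastCases with
      | last =>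
        exfalso; apply hvS a
        rw [← hfc a, hab, hfl]
      | cast b =>
        have : (e a : V) = (e b : V) := by rw [← hfc a, ← hfc b, hab]
        have : e a = e b := Subtype.ext this
        rw [e.injective this]
  have hsurj : Function.Surjective f := by
    rintro ⟨u, hu⟩
    rcases hu with rfl | hu
    · exact ⟨Fin.last n, Subtype.ext hfl⟩
    · exact ⟨(e.symm ⟨u, hu⟩).castSucc, Subtype.ext (by rw [hfc]; simp)⟩
  let e' : Fin (n + 1) ≃ ↥T := Equiv.ofBijective f ⟨hinj, hsurj⟩
  have he' : ∀ j, (e' j : V) = (f j : V) := fun j => rfl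
  refine ⟨n + 1, e', fun i hi => ?_⟩
  have key : ∀ i : Fin (n+1), {j : Fin (n+1) | j < i ∧ (G.induce T).Adj (e' j) (e' i)}
      = {j : Fin (n+1) | j < i ∧ G.Adj ((f j : V)) ((f i : V))} := by
    intro i; ext j; simp [e']; exact fun _ => Iff.rfl
  induction i using Fin.lastCases with
  | last =>
    have himg : {j : Fin (n+1) | j < Fin.last n ∧ G.Adj ((f j : V)) ((f (Fin.last n) : V))}
        = Fin.castSucc '' {j₀ : Fin n | G.Adj ((e j₀ : V)) v} := by
      ext j
      constructor
      · rintro ⟨hlt, hadj⟩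
        obtain ⟨j₀, rfl⟩ := Fin.exists_castSucc_eq.mpr (Fin.ne_of_lt hlt)
        rw [hfc, hfl] at hadj
        exact ⟨j₀, hadj, rfl⟩
      · rintro ⟨j₀, hadj, rfl⟩
        exact ⟨Fin.castSucc_lt_last _, by rw [hfc, hfl]; exact hadj⟩
    rw [key, himg, Set.ncard_image_of_injective _ (Fin.castSucc_injective n)]
    have : {j₀ : Fin n | G.Adj ((e j₀ : V)) v}.ncard
        = {x : ↥S | G.Adj (x : V) v}.ncard := ncard_comp_equiv e (fun x : ↥S => G.Adj (x : V) v)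
    have h2 := ncard_subtype S (fun u => G.Adj u v)
    rw [this, h2]
    exact hodd
  | cast i₀ =>
    have hi₀ : 0 < i₀.val := hi
    have himg : {j : Fin (n+1) | j < i₀.castSucc ∧ G.Adj ((f j : V)) ((f i₀.castSucc : V))}
        = Fin.castSucc '' {j₀ : Fin n | j₀ < i₀ ∧ G.Adj ((e j₀ : V)) ((e i₀ : V))} := by
      ext j
      constructor
      · rintro ⟨hlt, hadj⟩
        have hjl : j ≠ Fin.last n := Fin.ne_of_lt (lt_of_lt_of_le hlt (Fin.le_last _))
        obtain ⟨j₀, rfl⟩ := Fin.exists_castSucc_eq.mpr hjl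
        rw [hfc, hfc] at hadj
        exact ⟨j₀, ⟨Fin.castSucc_lt_castSucc_iff.mp hlt, hadj⟩, rfl⟩
      · rintro ⟨j₀, ⟨hlt, hadj⟩, rfl⟩
        exact ⟨Fin.castSucc_lt_castSucc_iff.mpr hlt, by rw [hfc, hfc]; exact hadj⟩
    rw [key, himg, Set.ncard_image_of_injective _ (Fin.castSucc_injective n)]
    have hset : {j₀ : Fin n | j₀ < i₀ ∧ G.Adj ((e j₀ : V)) ((e i₀ : V))}
        = {j₀ : Fin n | j₀ < i₀ ∧ (G.induce S).Adj (e j₀) (e i₀)} := by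
      ext j₀; simp
    rw [hset]
    exact he i₀ hi₀

lemma dco_shrink (G : SimpleGraph V) {S : Set V} {n : ℕ} (e : Fin (n + 1) ≃ ↥S)
    (he : ∀ i : Fin (n + 1), 0 < i.val →
      Odd ({j : Fin (n + 1) | j < i ∧ (G.induce S).Adj (e j) (e i)}.ncard)) :
    DualCriticalOrd (G.induce (S \ {(e (Fin.last n) : V)})) ∧
      (0 < n → Odd (degIn G (S \ {(e (Fin.last n) : V)}) (e (Fin.last n)))) := by
  set v : V := (e (Fin.last n) : V) with hvdef
  set S' : Set V := S \ {v} with hS'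
  have hmem : ∀ j : Fin n, (e j.castSucc : V) ∈ S' := by
    intro j
    refine ⟨(e j.castSucc).2, ?_⟩
    simp only [Set.mem_singleton_iff, hvdef]
    intro hcontra
    have : e j.castSucc = e (Fin.last n) := Subtype.ext hcontra
    exact absurd (e.injective this) (Fin.ne_of_lt (Fin.castSucc_lt_last j))
  let f : Fin n → ↥S' := fun j => ⟨(e j.castSucc : V), hmem j⟩
  have hinj : Function.Injective f := by
    intro a b hab
    have hval := congrArg Subtype.val hab
    exact Fin.castSucc_injective n (e.injective (Subtype.ext hval))
  have hsurj : Function.Surjective f := by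
    rintro ⟨u, hu, hune⟩
    obtain ⟨k, hk⟩ : ∃ k, e k = ⟨u, hu⟩ := ⟨e.symm ⟨u, hu⟩, by simp⟩
    have hkl : k ≠ Fin.last n := by
      rintro rfl
      exact hune (by simp [hvdef, hk])
    obtain ⟨j₀, rfl⟩ := Fin.exists_castSucc_eq.mpr hkl
    exact ⟨j₀, Subtype.ext (by simp [f, hk])⟩
  let e' : Fin n ≃ ↥S' := Equiv.ofBijective f ⟨hinj, hsurj⟩
  constructor
  · refine ⟨n, e', fun i₀ hi₀ => ?_⟩
    have key : {j : Fin n | j < i₀ ∧ (G.induce S').Adj (e' j) (e' i₀)}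
        = {j : Fin n | j < i₀ ∧ G.Adj ((e j.castSucc : V)) ((e i₀.castSucc : V))} := by
      ext j; simp [e', f]; exact fun _ => Iff.rfl
    have himg : {j : Fin (n+1) | j < i₀.castSucc ∧ (G.induce S).Adj (e j) (e i₀.castSucc)}
        = Fin.castSucc '' {j : Fin n | j < i₀ ∧ G.Adj ((e j.castSucc : V)) ((e i₀.castSucc : V))} := by
      ext j
      constructor
      · rintro ⟨hlt, hadj⟩
        have hjl : j ≠ Fin.last n := Fin.ne_of_lt (lt_of_lt_of_le hlt (Fin.le_last _))
        obtain ⟨j₀, rfl⟩ := Fin.exists_castSucc_eq.mpr hjl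
        exact ⟨j₀, ⟨Fin.castSucc_lt_castSucc_iff.mp hlt, by simpa using hadj⟩, rfl⟩
      · rintro ⟨j₀, ⟨hlt, hadj⟩, rfl⟩
        exact ⟨Fin.castSucc_lt_castSucc_iff.mpr hlt, by simpa using hadj⟩
    have := he i₀.castSucc (by simpa using hi₀)
    rw [himg, Set.ncard_image_of_injective _ (Fin.castSucc_injective n)] at this
    rwa [key]
  · intro hn
    have hlast := he (Fin.last n) (by simpa using hn)
    have himg : {j : Fin (n+1) | j < Fin.last n ∧ (G.induce S).Adj (e j) (e (Fin.last n))}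
        = Fin.castSucc '' {j : Fin n | G.Adj ((e j.castSucc : V)) v} := by
      ext j
      constructor
      · rintro ⟨hlt, hadj⟩
        obtain ⟨j₀, rfl⟩ := Fin.exists_castSucc_eq.mpr (Fin.ne_of_lt hlt)
        exact ⟨j₀, by simpa using hadj, rfl⟩
      · rintro ⟨j₀, hadj, rfl⟩
        exact ⟨Fin.castSucc_lt_last _, by simpa using hadj⟩
    rw [himg, Set.ncard_image_of_injective _ (Fin.castSucc_injective n)] at hlast
    have h1 : {j : Fin n | G.Adj ((e j.castSucc : V)) v}
        = {j : Fin n | G.Adj ((e' j : V)) v} := by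
      ext j; simp [e', f]; exact Iff.rfl
    have h2 := ncard_comp_equiv e' (fun x : ↥S' => G.Adj (x : V) v)
    have h3 := ncard_subtype S' (fun u => G.Adj u v)
    rw [h1] at hlast
    rw [degIn, ← h3, ← h2]
    exact hlast

lemma cut_singleton_right (G : SimpleGraph V) (A : Set V) (b : V) :
    cut G A {b} = degIn G A b := by
  have : {p : V × V | p.1 ∈ A ∧ p.2 ∈ ({b} : Set V) ∧ G.Adj p.1 p.2}
      = (fun u => (u, b)) '' {u | u ∈ A ∧ G.Adj u b} := by
    ext ⟨x, y⟩
    constructor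
    · rintro ⟨hx, rfl, hadj⟩; exact ⟨x, ⟨hx, hadj⟩, rfl⟩
    · rintro ⟨u, ⟨hu, hadj⟩, heq⟩
      obtain ⟨rfl, rfl⟩ := Prod.mk.injEq .. ▸ heq
      exact ⟨hu, rfl, hadj⟩
  rw [cut, this, Set.ncard_image_of_injective _ (fun u v h => (Prod.mk.injEq .. ▸ h).1)]
  rfl

lemma cut_singleton_left (G : SimpleGraph V) (B : Set V) (b : V) :
    cut G {b} B = degIn G B b := by
  have : {p : V × V | p.1 ∈ ({b} : Set V) ∧ p.2 ∈ B ∧ G.Adj p.1 p.2}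
      = (fun u => (b, u)) '' {u | u ∈ B ∧ G.Adj u b} := by
    ext ⟨x, y⟩
    constructor
    · rintro ⟨rfl, hy, hadj⟩; exact ⟨y, ⟨hy, hadj.symm⟩, rfl⟩
    · rintro ⟨u, ⟨hu, hadj⟩, heq⟩
      obtain ⟨rfl, rfl⟩ := Prod.mk.injEq .. ▸ heq
      exact ⟨rfl, hu, hadj.symm⟩
  rw [cut, this, Set.ncard_image_of_injective _ (fun u v h => (Prod.mk.injEq .. ▸ h).2)]
  rfl

lemma cut_union_right [Fintype V] (G : SimpleGraph V) (A B₁ B₂ : Set V)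
    (h : Disjoint B₁ B₂) : cut G A (B₁ ∪ B₂) = cut G A B₁ + cut G A B₂ := by
  have hs : {p : V × V | p.1 ∈ A ∧ p.2 ∈ B₁ ∪ B₂ ∧ G.Adj p.1 p.2}
      = {p : V × V | p.1 ∈ A ∧ p.2 ∈ B₁ ∧ G.Adj p.1 p.2}
        ∪ {p : V × V | p.1 ∈ A ∧ p.2 ∈ B₂ ∧ G.Adj p.1 p.2} := by
    ext ⟨x, y⟩
    simp only [Set.mem_setOf_eq, Set.mem_union]
    tauto
  have hd : Disjoint {p : V × V | p.1 ∈ A ∧ p.2 ∈ B₁ ∧ G.Adj p.1 p.2}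
      {p : V × V | p.1 ∈ A ∧ p.2 ∈ B₂ ∧ G.Adj p.1 p.2} := by
    rw [Set.disjoint_left]
    rintro ⟨x, y⟩ ⟨_, hy1, _⟩ ⟨_, hy2, _⟩
    exact (h.ne_of_mem hy1 hy2) rfl
  rw [cut, hs, Set.ncard_union_eq hd (Set.toFinite _) (Set.toFinite _)]
  rfl

lemma cut_union_left [Fintype V] (G : SimpleGraph V) (A₁ A₂ B : Set V)
    (h : Disjoint A₁ A₂) : cut G (A₁ ∪ A₂) B = cut G A₁ B + cut G A₂ B := by
  have hs : {p : V × V | p.1 ∈ A₁ ∪ A₂ ∧ p.2 ∈ B ∧ G.Adj p.1 p.2}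
      = {p : V × V | p.1 ∈ A₁ ∧ p.2 ∈ B ∧ G.Adj p.1 p.2}
        ∪ {p : V × V | p.1 ∈ A₂ ∧ p.2 ∈ B ∧ G.Adj p.1 p.2} := by
    ext ⟨x, y⟩
    simp only [Set.mem_setOf_eq, Set.mem_union]
    tauto
  have hd : Disjoint {p : V × V | p.1 ∈ A₁ ∧ p.2 ∈ B ∧ G.Adj p.1 p.2}
      {p : V × V | p.1 ∈ A₂ ∧ p.2 ∈ B ∧ G.Adj p.1 p.2} := by
    rw [Set.disjoint_left]
    rintro ⟨x, y⟩ ⟨hx1, _, _⟩ ⟨hx2, _, _⟩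
    exact (h.ne_of_mem hx1 hx2) rfl
  rw [cut, hs, Set.ncard_union_eq hd (Set.toFinite _) (Set.toFinite _)]
  rfl

lemma degIn_union [Fintype V] (G : SimpleGraph V) (S₁ S₂ : Set V) (v : V)
    (h : Disjoint S₁ S₂) : degIn G (S₁ ∪ S₂) v = degIn G S₁ v + degIn G S₂ v := by
  have hs : {u | u ∈ S₁ ∪ S₂ ∧ G.Adj u v}
      = {u | u ∈ S₁ ∧ G.Adj u v} ∪ {u | u ∈ S₂ ∧ G.Adj u v} := by
    ext u
    simp only [Set.mem_setOf_eq, Set.mem_union]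
    tauto
  have hd : Disjoint {u | u ∈ S₁ ∧ G.Adj u v} {u | u ∈ S₂ ∧ G.Adj u v} := by
    rw [Set.disjoint_left]
    rintro u ⟨h1, _⟩ ⟨h2, _⟩
    exact (h.ne_of_mem h1 h2) rfl
  rw [degIn, hs, Set.ncard_union_eq hd (Set.toFinite _) (Set.toFinite _)]
  rfl

lemma ncard_eq_of_equiv_fin {S : Set V} {n : ℕ} (e : Fin n ≃ ↥S) : S.ncard = n := by
  rw [← Nat.card_coe_set_eq]
  exact Nat.card_eq_of_equiv_fin e.symm

lemma dco_union [Fintype V] (G : SimpleGraph V) :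
    ∀ (m : ℕ) (B A : Set V), B.ncard ≤ m → A.Nonempty → B.Nonempty → Disjoint A B →
      DualCriticalOrd (G.induce A) → DualCriticalOrd (G.induce B) →
      Odd (cut G A B) → DualCriticalOrd (G.induce (A ∪ B)) := by
  intro m
  induction m with
  | zero =>
    intro B A hB _ hBne _ _ _ _
    rw [Nat.le_zero, Set.ncard_eq_zero (Set.toFinite B)] at hB
    exact absurd hB hBne.ne_empty
  | succ m ih =>
    intro B A hBm hAne hBne hdisj hA hB hcut
    obtain ⟨n, e, he⟩ := hB
    have hBn : B.ncard = n := ncard_eq_of_equiv_fin e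
    match n, e, he, hBn with
    | 0, e, he, hBn =>
      exact absurd (e.symm ⟨hBne.choose, hBne.choose_spec⟩).pos (by simp)
    | (k + 1), e, he, hBn =>
      set b : V := (e (Fin.last k) : V) with hb
      have hbB : b ∈ B := (e (Fin.last k)).2
      have hbA : b ∉ A := fun h => Set.disjoint_left.mp hdisj h hbB
      obtain ⟨hDC', hodd'⟩ := dco_shrink G e he
      rcases Nat.eq_zero_or_pos k with rfl | hk
      · -- B is a singleton {b}
        have hBsing : B = {b} := by
          have h1 : B.ncard = 1 := hBn
          obtain ⟨x, hx⟩ := (Set.ncard_eq_one).mp h1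
          rw [hx]; rw [hx] at hbB; simp_all
        have hdeg : Odd (degIn G A b) := by
          rwa [hBsing, cut_singleton_right] at hcut
        have := dco_insert G hbA hA hdeg
        rwa [show insert b A = A ∪ B by rw [hBsing, Set.union_comm, Set.singleton_union]] at this
      · -- k ≥ 1
        have hoddB' : Odd (degIn G (B \ {b}) b) := hodd' hk
        set B' : Set V := B \ {b} with hB'
        have hB'ne : B'.Nonempty := by
          rw [← Set.ncard_pos (Set.toFinite _)]
          have : B'.ncard = k := by
            rw [hB', Set.ncard_diff_singleton_of_mem hbB, hBn]
            omega
          omega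
        have hB'card : B'.ncard ≤ m := by
          have : B'.ncard = k := by
            rw [hB', Set.ncard_diff_singleton_of_mem hbB, hBn]
            omega
          omega
        have hBsplit : B = B' ∪ {b} := by
          rw [hB']; ext x; by_cases hx : x = b <;> simp [hx, hbB]
        have hdisj' : Disjoint B' ({b} : Set V) := by
          rw [Set.disjoint_left]; rintro x ⟨_, hne⟩ rfl; exact hne rfl
        have hcutsplit : cut G A B = cut G A B' + degIn G A b := by
          rw [hBsplit, cut_union_right G A B' {b} hdisj', cut_singleton_right]
        have hdisjAB' : Disjoint A B' := hdisj.mono_right (Set.diff_subset)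
        rcases Nat.even_or_odd (degIn G A b) with hev | hod
        · -- deg(b, A) even: recurse with (A, B'), then insert b
          have hcutAB' : Odd (cut G A B') := by
            rw [hcutsplit] at hcut
            exact (Nat.odd_add.mp hcut).mpr hev
          have hDCU := ih B' A hB'card hAne hB'ne hdisjAB' hA hDC' hcutAB'
          have hbAB' : b ∉ A ∪ B' := by
            rintro (h | h)
            · exact hbA h
            · exact h.2 rfl
          have hdeg : Odd (degIn G (A ∪ B') b) := by
            rw [degIn_union G A B' b hdisjAB']
            exact Even.add_odd hev hoddB'
          have := dco_insert G hbAB' hDCU hdeg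
          rwa [show insert b (A ∪ B') = A ∪ B by
            rw [hBsplit, ← Set.union_assoc, Set.union_singleton]] at this
        · -- deg(b, A) odd: move b to A, recurse with (A ∪ {b}, B')
          have hDCA' := dco_insert G hbA hA hod
          have hA'form : insert b A = A ∪ {b} := by
            ext x; by_cases hx : x = b <;> simp [hx]
          rw [hA'form] at hDCA'
          have hdisjA'B' : Disjoint (A ∪ {b}) B' := by
            rw [Set.disjoint_union_left]
            refine ⟨hdisjAB', ?_⟩
            rw [Set.disjoint_left]; rintro x rfl ⟨_, hne⟩; exact hne rfl
          have hcutAB'even : Even (cut G A B') := by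
            rw [hcutsplit] at hcut
            rw [← Nat.not_odd_iff_even]
            intro h1
            exact (Nat.not_odd_iff_even.mpr ((Nat.odd_add.mp hcut).mp h1)) hod
          have hcutA'B' : Odd (cut G (A ∪ {b}) B') := by
            rw [cut_union_left G A {b} B' (by
              rw [Set.disjoint_left]; rintro x hx rfl; exact hbA hx),
              cut_singleton_left]
            exact Even.add_odd hcutAB'even hoddB'
          have hDCU := ih B' (A ∪ {b}) hB'card (hAne.mono Set.subset_union_left)
            hB'ne hdisjA'B' hDCA' hDC' hcutA'B'
          rwa [show (A ∪ {b}) ∪ B' = A ∪ B by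
            rw [Set.union_assoc, Set.union_comm ({b} : Set V) B', ← hBsplit]] at hDCU

lemma dco_singleton (G : SimpleGraph V) (v : V) :
    DualCriticalOrd (G.induce ({v} : Set V)) := by
  have hbij : Function.Bijective (fun _ : Fin 1 => (⟨v, rfl⟩ : ↥({v} : Set V))) := by
    constructor
    · intro a b _; omega
    · rintro ⟨u, rfl⟩; exact ⟨0, rfl⟩
  refine ⟨1, Equiv.ofBijective _ hbij, fun i hi => ?_⟩
  exact absurd hi (by omega)

theorem stmt5 [Fintype V] (G : SimpleGraph V) (h : 1 < Fintype.card V) :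
    DualCriticalOrd G ↔
      ∃ A B : Set V, A.Nonempty ∧ B.Nonempty ∧ Disjoint A B ∧ A ∪ B = Set.univ ∧
        DualCriticalOrd (G.induce A) ∧ DualCriticalOrd (G.induce B) ∧
        Odd (cut G A B) := by
  constructor
  · intro hG
    have hGu : DualCriticalOrd (G.induce (Set.univ : Set V)) := by
      refine dco_congr (Equiv.Set.univ V).symm (fun a b => ?_) hG
      simp
    obtain ⟨n, e, he⟩ := hGu
    have hn : n = Fintype.card V := by
      have := ncard_eq_of_equiv_fin e
      rw [Set.ncard_univ, Nat.card_eq_fintype_card] at this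
      omega
    match n, e, he, hn with
    | 0, _, _, hn => omega
    | (m + 1), e, he, hn =>
      set v : V := (e (Fin.last m) : V) with hv
      have hm : 0 < m := by omega
      obtain ⟨hDC', hodd'⟩ := dco_shrink G e he
      have hoddA : Odd (degIn G (Set.univ \ {v}) v) := hodd' hm
      obtain ⟨u, hu⟩ := Fintype.exists_ne_of_one_lt_card h v
      refine ⟨Set.univ \ {v}, {v}, ⟨u, by simp [hu]⟩, ⟨v, rfl⟩, ?_, ?_, hDC', dco_singleton G v, ?_⟩
      · rw [Set.disjoint_left]; rintro x ⟨_, hne⟩ rfl; exact hne rfl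
      · rw [Set.diff_union_of_subset (by simp)]
      · rwa [cut_singleton_right]
  · rintro ⟨A, B, hAne, hBne, hdisj, huniv, hA, hB, hcut⟩
    have := dco_union G B.ncard B A le_rfl hAne hBne hdisj hA hB hcut
    rw [huniv] at this
    refine dco_congr (Equiv.Set.univ V) (fun a b => ?_) this
    simp
end

section
/- If G is dual-critical, then for every proper subset T of V with |T| ≡ |E| (mod 2), G has a T-odd acyclic orientation. -/
variable {V : Type*}

namespace TOddAux

/-- back-degree of position `i` in an ordering `e`. -/
noncomputable def bdeg (G : SimpleGraph V) {n : ℕ} (e : Fin n → V) (i : Fin n) : ℕ :=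
  {j : Fin n | j < i ∧ G.Adj (e j) (e i)}.ncard

/-- number of neighbours. -/
noncomputable def ndeg (G : SimpleGraph V) (v : V) : ℕ := {u | G.Adj u v}.ncard

def GoodOrd (G : SimpleGraph V) {n : ℕ} (e : Fin n ≃ V) : Prop :=
  ∀ i : Fin n, 0 < i.val → Odd (bdeg G e i)

def Realizes (G : SimpleGraph V) {n : ℕ} (e : Fin n ≃ V) (T : Set V) : Prop :=
  ∀ i : Fin n, e i ∈ T ↔ Odd (bdeg G e i)

noncomputable def extEquiv {n : ℕ} {w : V} (f' : Fin n ≃ ↥({w}ᶜ : Set V)) : Fin (n+1) ≃ V :=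
  letI := Classical.decEq V
  finSuccEquivLast.trans
    ((f'.trans (Equiv.subtypeEquivRight (fun x => by simp))).optionCongr.trans
      (Equiv.optionSubtypeNe w))

@[simp] lemma extEquiv_castSucc {n : ℕ} {w : V} (f' : Fin n ≃ ↥({w}ᶜ : Set V)) (i : Fin n) :
    extEquiv f' i.castSucc = ↑(f' i) := by
  simp [extEquiv]

@[simp] lemma extEquiv_last {n : ℕ} {w : V} (f' : Fin n ≃ ↥({w}ᶜ : Set V)) :
    extEquiv f' (Fin.last n) = w := by
  simp [extEquiv]

lemma ncard_adj_preimage (G : SimpleGraph V) {n : ℕ} (g : Fin n ≃ V) (v : V) :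
    {j : Fin n | G.Adj (g j) v}.ncard = ndeg G v := by
  unfold ndeg
  have h : {u | G.Adj u v} = g '' {j : Fin n | G.Adj (g j) v} := by
    ext u
    constructor
    · intro hu
      exact ⟨g.symm u, by simpa using hu, g.apply_symm_apply u⟩
    · rintro ⟨j, hj, rfl⟩
      exact hj
  rw [h, Set.ncard_image_of_injective _ g.injective]

lemma bdeg_last (G : SimpleGraph V) {n : ℕ} (e : Fin (n+1) ≃ V) :
    bdeg G e (Fin.last n) = ndeg G (e (Fin.last n)) := by
  rw [← ncard_adj_preimage G e (e (Fin.last n))]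
  unfold bdeg
  congr 1
  ext j
  simp only [Set.mem_setOf_eq, and_iff_right_iff_imp]
  intro hadj
  have hne : j ≠ Fin.last n := by
    intro hc; rw [hc] at hadj; exact G.irrefl hadj
  exact lt_of_le_of_ne (Fin.le_last j) hne

lemma bdeg_castSucc (G : SimpleGraph V) {n : ℕ} {s : Set V} (e : Fin (n+1) → V)
    (e' : Fin n → ↥s) (he : ∀ j, (e' j : V) = e j.castSucc) (i : Fin n) :
    bdeg G e i.castSucc = bdeg (G.induce s) e' i := by
  unfold bdeg
  have h : {j : Fin (n+1) | j < i.castSucc ∧ G.Adj (e j) (e i.castSucc)} =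
      Fin.castSucc '' {j : Fin n | j < i ∧ (G.induce s).Adj (e' j) (e' i)} := by
    ext j
    simp only [Set.mem_image, Set.mem_setOf_eq]
    constructor
    · rintro ⟨hlt, hadj⟩
      have hjne : j ≠ Fin.last n := by
        intro hc
        rw [hc] at hlt
        exact absurd hlt (not_lt.mpr (Fin.le_last _))
      obtain ⟨j', rfl⟩ := Fin.exists_castSucc_eq.mpr hjne
      refine ⟨j', ⟨by simpa using hlt, ?_⟩, rfl⟩
      show G.Adj (e' j' : V) (e' i : V)
      rw [he, he]
      exact hadj
    · rintro ⟨j', ⟨hlt, hadj⟩, rfl⟩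
      refine ⟨by simpa using hlt, ?_⟩
      have hadj' : G.Adj (e' j' : V) (e' i : V) := hadj
      rw [he, he] at hadj'
      exact hadj'
  rw [h, Set.ncard_image_of_injective _ (Fin.castSucc_injective n)]

lemma bdeg_rev_add (G : SimpleGraph V) {n : ℕ} (g : Fin n ≃ V) (i : Fin n) :
    bdeg G (Fin.revPerm.trans g) i + bdeg G g i.rev = ndeg G (g i.rev) := by
  set v := g i.rev with hv
  set A : Set (Fin n) := {k | i.rev < k ∧ G.Adj (g k) v} with hA
  set B : Set (Fin n) := {k | k < i.rev ∧ G.Adj (g k) v} with hB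
  have h1 : bdeg G (Fin.revPerm.trans g) i = A.ncard := by
    unfold bdeg
    have himg : {j : Fin n | j < i ∧ G.Adj ((Fin.revPerm.trans g) j) ((Fin.revPerm.trans g) i)} =
        Fin.rev '' A := by
      ext j
      simp only [Set.mem_image, hA, Set.mem_setOf_eq, Equiv.trans_apply, Fin.revPerm_apply]
      constructor
      · intro ⟨hlt, hadj⟩
        exact ⟨j.rev, ⟨by simpa using Fin.rev_lt_rev.mpr hlt, by simpa using hadj⟩, Fin.rev_rev j⟩
      · rintro ⟨k, ⟨hlt, hadj⟩, rfl⟩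
        refine ⟨?_, by simpa using hadj⟩
        have := Fin.rev_lt_rev.mpr hlt
        simpa using this
    rw [himg, Set.ncard_image_of_injective _ Fin.rev_injective]
  have h2 : bdeg G g i.rev = B.ncard := rfl
  have h3 : A ∪ B = {k : Fin n | G.Adj (g k) v} := by
    ext k
    simp only [hA, hB, Set.mem_union, Set.mem_setOf_eq]
    constructor
    · rintro (⟨_, h⟩ | ⟨_, h⟩) <;> exact h
    · intro h
      have hne : k ≠ i.rev := by
        intro hc; rw [hc, ← hv] at h; exact G.irrefl h
      rcases lt_or_gt_of_ne hne with hlt | hgt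
      · exact Or.inr ⟨hlt, h⟩
      · exact Or.inl ⟨hgt, h⟩
  have hdisj : Disjoint A B := by
    rw [Set.disjoint_left]
    rintro k ⟨h1', _⟩ ⟨h2', _⟩
    exact absurd h2' (not_lt.mpr h1'.le)
  have h4 : A.ncard + B.ncard = (A ∪ B).ncard :=
    (Set.ncard_union_eq hdisj A.toFinite B.toFinite).symm
  rw [h1, h2, h4, h3, ncard_adj_preimage]

lemma ndeg_eq_degree [Fintype V] (G : SimpleGraph V) [DecidableRel G.Adj] (v : V) :
    ndeg G v = G.degree v := by
  unfold ndeg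
  have h : {u | G.Adj u v} = G.neighborSet v := by
    ext u; simp [SimpleGraph.adj_comm]
  rw [h, Set.ncard_eq_toFinset_card', Set.toFinset_card]
  exact G.card_neighborSet_eq_degree v

lemma even_ncard_oddVerts [Fintype V] (G : SimpleGraph V) :
    Even {v | Odd (ndeg G v)}.ncard := by
  classical
  have h : {v | Odd (ndeg G v)} =
      ↑(Finset.univ.filter fun v => Odd (G.degree v)) := by
    ext v; simp [ndeg_eq_degree]
  rw [h, Set.ncard_coe_finset]
  exact G.even_card_odd_degree_vertices

lemma ncard_symmDiff_par [Fintype V] (T D : Set V) :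
    (symmDiff T D).ncard % 2 = (T.ncard + D.ncard) % 2 := by
  rw [Set.symmDiff_def]
  rw [Set.ncard_union_eq (disjoint_sdiff_sdiff) (T \ D).toFinite (D \ T).toFinite]
  have h1 := Set.ncard_inter_add_ncard_diff_eq_ncard T D T.toFinite
  have h2 := Set.ncard_inter_add_ncard_diff_eq_ncard D T D.toFinite
  rw [Set.inter_comm D T] at h2
  omega

universe u

lemma core (n : ℕ) : ∀ {W : Type u} [Fintype W] (G : SimpleGraph W) (e : Fin n ≃ W),
    GoodOrd G e → ∀ T : Set W, T ≠ Set.univ → (T.ncard + n) % 2 = 1 →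
    ∃ f : Fin n ≃ W, Realizes G f T := by
  induction n with
  | zero =>
    intro W _ G e _ T hT _
    exact absurd (Set.eq_univ_iff_forall.mpr fun x => (e.symm x).elim0) hT
  | succ n IH =>
    intro W _ G e he T hT hpar
    rcases Nat.eq_zero_or_pos n with rfl | hn
    · -- one vertex
      have hT0 : T = ∅ := by
        rcases Set.eq_empty_or_nonempty T with h | ⟨x, hx⟩
        · exact h
        · exfalso
          apply hT
          apply Set.eq_univ_iff_forall.mpr
          intro y
          have hyx : y = x := e.symm.injective (Fin.ext (by omega))
          rwa [hyx]
      refine ⟨e, fun i => ?_⟩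
      have hempty : {j : Fin 1 | j < i ∧ G.Adj (e j) (e i)} = ∅ := by
        ext j
        simp only [Set.mem_setOf_eq, Set.mem_empty_iff_false, iff_false, not_and]
        intro hj
        rw [Fin.ext (a := j) (b := i) (by omega)] at hj
        exact absurd hj (lt_irrefl i)
      have hb : bdeg G e i = 0 := by
        unfold bdeg
        rw [hempty]
        exact Set.ncard_empty _
      simp [hT0, hb]
    · set w := e (Fin.last n) with hw
      have hndegw : Odd (ndeg G w) := by
        rw [hw, ← bdeg_last G e]
        exact he _ hn
      have caseA : ∀ S : Set W, w ∈ S → S ≠ Set.univ → (S.ncard + (n+1)) % 2 = 1 →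
          ∃ f : Fin (n+1) ≃ W, Realizes G f S := by
        intro S hwS hSu hSpar
        haveI : Fintype ↥({w}ᶜ : Set W) := Fintype.ofFinite _
        set G' := G.induce ({w}ᶜ : Set W) with hG'
        have hmem : ∀ j : Fin n, e j.castSucc ∈ ({w}ᶜ : Set W) := by
          intro j
          simp only [Set.mem_compl_iff, Set.mem_singleton_iff, hw]
          intro hc
          exact absurd (e.injective hc) (Fin.ne_of_lt (Fin.castSucc_lt_last j))
        have hbij : Function.Bijective
            (fun j : Fin n => (⟨e j.castSucc, hmem j⟩ : ↥({w}ᶜ : Set W))) := by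
          constructor
          · intro a b hab
            exact Fin.castSucc_injective n (e.injective (congrArg Subtype.val hab))
          · rintro ⟨v, hv⟩
            have hvlast : e.symm v ≠ Fin.last n := by
              intro hc
              have hvw : v = w := by rw [hw, ← hc]; exact (e.apply_symm_apply v).symm
              exact hv (Set.mem_singleton_iff.mpr hvw)
            obtain ⟨j, hj⟩ := Fin.exists_castSucc_eq.mpr hvlast
            refine ⟨j, ?_⟩
            apply Subtype.ext
            show e j.castSucc = v
            rw [hj, e.apply_symm_apply]
        set e' : Fin n ≃ ↥({w}ᶜ : Set W) := Equiv.ofBijective _ hbij with he'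
        have he'val : ∀ j : Fin n, (e' j : W) = e j.castSucc := fun j => rfl
        have hgood' : GoodOrd G' e' := by
          intro i hi
          rw [← bdeg_castSucc G e e' he'val i]
          exact he i.castSucc (by simpa using hi)
        set S' : Set ↥({w}ᶜ : Set W) := Subtype.val ⁻¹' S with hS'def
        have hS'img : Subtype.val '' S' = S \ {w} := by
          rw [hS'def, Subtype.image_preimage_coe, Set.diff_eq, Set.inter_comm]
        have hS'card : S'.ncard = S.ncard - 1 := by
          rw [← Set.ncard_image_of_injective S' Subtype.val_injective, hS'img]
          exact Set.ncard_diff_singleton_of_mem hwS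
        have hSpos : 1 ≤ S.ncard := (Set.ncard_pos S.toFinite).mpr ⟨w, hwS⟩
        have hS'univ : S' ≠ Set.univ := by
          obtain ⟨x, hx⟩ := (Set.ne_univ_iff_exists_notMem S).mp hSu
          have hxw : x ≠ w := fun hc => hx (hc ▸ hwS)
          intro hc
          have hmemx : (⟨x, by simp [hxw]⟩ : ↥({w}ᶜ : Set W)) ∈ S' := hc ▸ Set.mem_univ _
          exact hx hmemx
        have hS'par : (S'.ncard + n) % 2 = 1 := by omega
        obtain ⟨f', hf'⟩ := IH G' e' hgood' S' hS'univ hS'par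
        refine ⟨extEquiv f', fun i => ?_⟩
        induction i using Fin.lastCases with
        | last =>
          have h1 : extEquiv f' (Fin.last n) = w := extEquiv_last f'
          have h2 : bdeg G (extEquiv f') (Fin.last n) = ndeg G w := by
            rw [bdeg_last G (extEquiv f'), h1]
          rw [h1, h2]
          exact iff_of_true hwS hndegw
        | cast i =>
          have h1 : extEquiv f' i.castSucc = ↑(f' i) := extEquiv_castSucc f' i
          have h2 : bdeg G (extEquiv f') i.castSucc = bdeg G' f' i :=
            bdeg_castSucc G (extEquiv f') f' (fun j => (extEquiv_castSucc f' j).symm) i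
          rw [h1, h2]
          exact hf' i
      by_cases hwT : w ∈ T
      · exact caseA T hwT hT hpar
      · set D : Set W := {v | Odd (ndeg G v)} with hD
        have hwD : w ∈ D := hndegw
        have hwS : w ∈ symmDiff T D := Set.mem_symmDiff.mpr (Or.inr ⟨hwD, hwT⟩)
        have hDeven : Even D.ncard := even_ncard_oddVerts G
        have hSpar2 : (symmDiff T D).ncard % 2 = T.ncard % 2 := by
          obtain ⟨k, hk⟩ := hDeven
          have hpp := ncard_symmDiff_par T D
          omega
        have hcardW : Fintype.card W = n + 1 := by
          rw [← Fintype.card_fin (n+1)]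
          exact Fintype.card_congr e.symm
        have hSu : symmDiff T D ≠ Set.univ := by
          intro hc
          have : (symmDiff T D).ncard = n + 1 := by rw [hc, Set.ncard_univ, Nat.card_eq_fintype_card, hcardW]
          omega
        obtain ⟨g, hg⟩ := caseA (symmDiff T D) hwS hSu (by omega)
        refine ⟨Fin.revPerm.trans g, fun i => ?_⟩
        have hgi : (Fin.revPerm.trans g) i = g i.rev := rfl
        have hsum := bdeg_rev_add G g i
        have hgS := hg i.rev
        rw [Set.mem_symmDiff] at hgS
        rw [hgi]
        by_cases h1 : g i.rev ∈ T <;> by_cases h2 : g i.rev ∈ D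
        · have hbodd : ¬ Odd (bdeg G g i.rev) := fun ho => by
            rcases hgS.mpr ho with ⟨-, hc⟩ | ⟨-, hc⟩ <;> exact hc ‹_›
          have hdodd : Odd (ndeg G (g i.rev)) := h2
          simp only [h1, true_iff]
          rw [Nat.odd_iff] at hbodd hdodd ⊢
          omega
        · have hbodd : Odd (bdeg G g i.rev) := hgS.mp (Or.inl ⟨h1, h2⟩)
          have hdodd : ¬ Odd (ndeg G (g i.rev)) := h2
          simp only [h1, true_iff]
          rw [Nat.odd_iff] at hbodd hdodd ⊢
          omega
        · have hbodd : Odd (bdeg G g i.rev) := hgS.mp (Or.inr ⟨h2, h1⟩)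
          have hdodd : Odd (ndeg G (g i.rev)) := h2
          simp only [h1, false_iff]
          rw [Nat.odd_iff] at hbodd hdodd ⊢
          omega
        · have hbodd : ¬ Odd (bdeg G g i.rev) := fun ho => by
            rcases hgS.mpr ho with ⟨hc, -⟩ | ⟨hc, -⟩ <;> exact absurd hc ‹_›
          have hdodd : ¬ Odd (ndeg G (g i.rev)) := h2
          simp only [h1, false_iff]
          rw [Nat.odd_iff] at hbodd hdodd ⊢
          omega

lemma edge_parity [Fintype V] (G : SimpleGraph V) {n : ℕ} (e : Fin n ≃ V)
    (he : GoodOrd G e) (hn : 0 < n) : (G.edgeSet.ncard + n) % 2 = 1 := by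
  classical
  set F : Finset (Fin n × Fin n) :=
    Finset.univ.filter (fun p => p.1 < p.2 ∧ G.Adj (e p.1) (e p.2)) with hF
  have h1 : G.edgeSet.ncard = F.card := by
    rw [Set.ncard_eq_toFinset_card' G.edgeSet]
    symm
    apply Finset.card_bij (fun p _ => s(e p.1, e p.2))
    · intro p hp
      simp only [hF, Finset.mem_filter] at hp
      simp only [Set.mem_toFinset, SimpleGraph.mem_edgeSet]
      exact hp.2.2
    · intro p hp q hq hpq
      simp only [hF, Finset.mem_filter, Finset.mem_univ, true_and] at hp hq
      rw [Sym2.eq_iff] at hpq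
      rcases hpq with ⟨ha, hb⟩ | ⟨ha, hb⟩
      · exact Prod.ext (e.injective ha) (e.injective hb)
      · exfalso
        have h1' := e.injective ha
        have h2' := e.injective hb
        rw [h1', h2'] at hp
        exact absurd hq.1 (not_lt.mpr hp.1.le)
    · intro z hz
      induction z using Sym2.ind with
      | _ u v =>
        simp only [Set.mem_toFinset, SimpleGraph.mem_edgeSet] at hz
        have hne : e.symm u ≠ e.symm v := fun hc => hz.ne (e.symm.injective hc)
        rcases lt_or_gt_of_ne hne with hlt | hgt
        · refine ⟨(e.symm u, e.symm v), ?_, ?_⟩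
          · simp only [hF, Finset.mem_filter, Finset.mem_univ, true_and]
            exact ⟨hlt, by simpa using hz⟩
          · simp
        · refine ⟨(e.symm v, e.symm u), ?_, ?_⟩
          · simp only [hF, Finset.mem_filter, Finset.mem_univ, true_and]
            exact ⟨hgt, by simpa using hz.symm⟩
          · simp [Sym2.eq_swap]
  have h2 : F.card = ∑ i : Fin n,
      (Finset.univ.filter (fun j : Fin n => j < i ∧ G.Adj (e j) (e i))).card := by
    rw [Finset.card_eq_sum_card_fiberwise
      (f := Prod.snd) (t := Finset.univ) (fun p _ => Finset.mem_univ _)]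
    apply Finset.sum_congr rfl
    intro i _
    apply Finset.card_bij (fun p _ => p.1)
    · intro p hp
      simp only [hF, Finset.mem_filter, Finset.mem_univ, true_and] at hp
      obtain ⟨⟨hlt, hadj⟩, hsnd⟩ := hp
      simp only [Finset.mem_filter, Finset.mem_univ, true_and]
      rw [← hsnd]
      exact ⟨hlt, hadj⟩
    · intro p hp q hq hpq
      simp only [hF, Finset.mem_filter] at hp hq
      exact Prod.ext hpq (hp.2.trans hq.2.symm)
    · intro j hj
      simp only [Finset.mem_filter, Finset.mem_univ, true_and] at hj
      refine ⟨(j, i), ?_, rfl⟩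
      simp only [hF, Finset.mem_filter, Finset.mem_univ, true_and]
      exact ⟨hj, trivial⟩
  have h3 : ∀ i : Fin n, bdeg G e i =
      (Finset.univ.filter (fun j : Fin n => j < i ∧ G.Adj (e j) (e i))).card := by
    intro i
    unfold bdeg
    rw [Set.ncard_eq_toFinset_card']
    congr 1
    ext j
    simp
  have h4 : ∀ i : Fin n, bdeg G e i % 2 = if 0 < i.val then 1 else 0 := by
    intro i
    by_cases hi : 0 < i.val
    · rw [if_pos hi, ← Nat.odd_iff]
      exact he i hi
    · rw [if_neg hi]
      have hempty : {j : Fin n | j < i ∧ G.Adj (e j) (e i)} = ∅ := by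
        ext j
        simp only [Set.mem_setOf_eq, Set.mem_empty_iff_false, iff_false, not_and]
        intro hj
        exact absurd (Fin.lt_def.mp hj) (by omega)
      have hb0 : bdeg G e i = 0 := by
        unfold bdeg
        rw [hempty]
        exact Set.ncard_empty _
      rw [hb0]
  have hcf : (Finset.univ.filter (fun i : Fin n => 0 < i.val)).card = n - 1 := by
    have htot := Finset.card_filter_add_card_filter_not
      (s := (Finset.univ : Finset (Fin n))) (p := fun i : Fin n => 0 < i.val)
    have hneg : (Finset.univ.filter (fun i : Fin n => ¬ 0 < i.val)).card = 1 := by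
      have hone : Finset.univ.filter (fun i : Fin n => ¬ 0 < i.val) = {(⟨0, hn⟩ : Fin n)} := by
        ext j
        simp only [Finset.mem_filter, Finset.mem_univ, true_and, Finset.mem_singleton,
          Fin.ext_iff]
        omega
      rw [hone, Finset.card_singleton]
    rw [Finset.card_univ, Fintype.card_fin] at htot
    omega
  have h5 : (∑ i : Fin n, bdeg G e i) % 2 = (n - 1) % 2 := by
    rw [Finset.sum_nat_mod]
    have hsc : ∑ i : Fin n, bdeg G e i % 2 =
        ∑ i : Fin n, (if 0 < i.val then 1 else 0) :=
      Finset.sum_congr rfl (fun i _ => h4 i)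
    rw [hsc, ← Finset.card_filter, hcf]
  have hE : G.edgeSet.ncard = ∑ i : Fin n, bdeg G e i := by
    rw [h1, h2]
    exact Finset.sum_congr rfl (fun i _ => (h3 i).symm)
  rw [hE]
  omega

lemma exists_goodOrd [Fintype V] (G : SimpleGraph V) (h : DualCritical G) :
    ∃ (n : ℕ) (e : Fin n ≃ V), GoodOrd G e := by
  classical
  obtain ⟨r, ⟨hor1, hor2⟩, hac, s, hodd⟩ := h
  set p : V → V → Prop := fun a b => Relation.TransGen r a b ∨ a = b with hp
  haveI : IsRefl V p := ⟨fun a => Or.inr rfl⟩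
  haveI : IsTrans V p := ⟨fun a b c hab hbc => by
    rcases hab with hab | rfl
    · rcases hbc with hbc | rfl
      · exact Or.inl (hab.trans hbc)
      · exact Or.inl hab
    · exact hbc⟩
  haveI : IsAntisymm V p := ⟨fun a b hab hba => by
    rcases hab with hab | rfl
    · rcases hba with hba | rfl
      · exact absurd (hab.trans hba) (hac a)
      · rfl
    · rfl⟩
  haveI hpo : IsPartialOrder V p := {}
  obtain ⟨q, hq, hpq⟩ := extend_partialOrder p
  haveI := hq
  set l := Finset.sort Finset.univ q with hldef
  have hlen : l.length = Fintype.card V := by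
    rw [hldef, Finset.length_sort, Finset.card_univ]
  set N := Fintype.card V with hN
  have hnodup : l.Nodup := Finset.sort_nodup Finset.univ q
  have hget_inj : Function.Injective l.get := List.nodup_iff_injective_get.mp hnodup
  set e0 : Fin N → V := fun i => l.get (Fin.cast hlen.symm i) with he0
  have hbij : Function.Bijective e0 := by
    constructor
    · intro a b hab
      have := hget_inj hab
      simpa [Fin.ext_iff] using this
    · intro v
      have hv : v ∈ l := (Finset.mem_sort q).mpr (Finset.mem_univ v)
      obtain ⟨k, hk⟩ := List.mem_iff_get.mp hv
      exact ⟨Fin.cast hlen k, hk⟩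
  set e : Fin N ≃ V := Equiv.ofBijective e0 hbij with he
  have heval : ∀ i, e i = e0 i := fun i => rfl
  have hsorted : ∀ i j : Fin N, i < j → q (e0 i) (e0 j) := by
    intro i j hij
    exact List.pairwise_iff_get.mp (Finset.pairwise_sort Finset.univ q)
      (Fin.cast hlen.symm i) (Fin.cast hlen.symm j) (by simpa using hij)
  have hpos : ∀ u v : V, r u v → e.symm u < e.symm v := by
    intro u v huv
    have hne : u ≠ v := by
      rintro rfl
      exact hac u (Relation.TransGen.single huv)
    have hq_uv : q u v := hpq _ _ (Or.inl (Relation.TransGen.single huv))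
    rcases lt_trichotomy (e.symm u) (e.symm v) with hlt | heq | hgt
    · exact hlt
    · exact absurd (e.symm.injective heq) hne
    · exfalso
      have hq_vu : q (e0 (e.symm v)) (e0 (e.symm u)) := hsorted _ _ hgt
      rw [← heval, ← heval, e.apply_symm_apply, e.apply_symm_apply] at hq_vu
      exact hne (antisymm hq_uv hq_vu)
  have hNpos : 0 < N := Fintype.card_pos_iff.mpr ⟨s⟩
  have key : ∀ i j : Fin N, (j < i ∧ G.Adj (e j) (e i)) ↔ r (e j) (e i) := by
    intro i j
    constructor
    · rintro ⟨hlt, hadj⟩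
      rcases (hor1 _ _).mp hadj with hr | hr
      · exact hr
      · exfalso
        have hlt2 := hpos _ _ hr
        simp only [Equiv.symm_apply_apply] at hlt2
        exact absurd hlt (not_lt.mpr hlt2.le)
    · intro hr
      refine ⟨?_, (hor1 _ _).mpr (Or.inl hr)⟩
      have hlt2 := hpos _ _ hr
      simpa using hlt2
  have hin : ∀ i : Fin N, {u | r u (e i)} = e '' {j : Fin N | j < i ∧ G.Adj (e j) (e i)} := by
    intro i
    ext u
    constructor
    · intro hu
      refine ⟨e.symm u, ?_, e.apply_symm_apply u⟩
      have hru : r (e (e.symm u)) (e i) := by rwa [e.apply_symm_apply]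
      exact (key i (e.symm u)).mpr hru
    · rintro ⟨j, hj, rfl⟩
      exact (key i j).mp hj
  have hindeg : ∀ i : Fin N, inDeg r (e i) = bdeg G e i := by
    intro i
    unfold inDeg bdeg
    rw [hin i, Set.ncard_image_of_injective _ e.injective]
  have h0 : e ⟨0, hNpos⟩ = s := by
    by_contra hc
    have hodd0 := hodd _ hc
    rw [hindeg ⟨0, hNpos⟩] at hodd0
    have hempty : {j : Fin N | j < ⟨0, hNpos⟩ ∧ G.Adj (e j) (e ⟨0, hNpos⟩)} = ∅ := by
      ext j
      simp only [Set.mem_setOf_eq, Set.mem_empty_iff_false, iff_false, not_and]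
      intro hj
      exact absurd (Fin.lt_def.mp hj) (Nat.not_lt_zero _)
    have hb0 : bdeg G e ⟨0, hNpos⟩ = 0 := by
      unfold bdeg
      rw [hempty]
      exact Set.ncard_empty _
    rw [hb0] at hodd0
    simp at hodd0
  refine ⟨N, e, fun i hi => ?_⟩
  have hne : e i ≠ s := by
    rw [← h0]
    intro hc
    have hii := e.injective hc
    rw [hii] at hi
    simp at hi
  rw [← hindeg i]
  exact hodd _ hne

lemma realizes_toOrientation [Fintype V] (G : SimpleGraph V) {n : ℕ} (f : Fin n ≃ V)
    (T : Set V) (hf : Realizes G f T) :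
    ∃ r : V → V → Prop, IsOrientation G r ∧ AcyclicRel r ∧ TOdd r T := by
  refine ⟨fun u v => G.Adj u v ∧ f.symm u < f.symm v, ⟨?_, ?_⟩, ?_, ?_⟩
  · intro u v
    constructor
    · intro hadj
      rcases lt_trichotomy (f.symm u) (f.symm v) with hlt | heq | hgt
      · exact Or.inl ⟨hadj, hlt⟩
      · exact absurd (f.symm.injective heq) hadj.ne
      · exact Or.inr ⟨hadj.symm, hgt⟩
    · rintro (⟨hadj, -⟩ | ⟨hadj, -⟩)
      · exact hadj
      · exact hadj.symm
  · rintro u v ⟨-, hlt⟩ ⟨-, hlt'⟩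
    exact absurd hlt' (not_lt.mpr hlt.le)
  · intro v hv
    have hmono : ∀ a b, Relation.TransGen
        (fun u v => G.Adj u v ∧ f.symm u < f.symm v) a b → f.symm a < f.symm b := by
      intro a b hab
      induction hab with
      | single h => exact h.2
      | tail _ h ih => exact ih.trans h.2
    exact absurd (hmono v v hv) (lt_irrefl _)
  · intro v
    have hdeq : inDeg (fun u v => G.Adj u v ∧ f.symm u < f.symm v) v
        = bdeg G f (f.symm v) := by
      unfold inDeg bdeg
      have himg : {u | G.Adj u v ∧ f.symm u < f.symm v} =
          f '' {j | j < f.symm v ∧ G.Adj (f j) (f (f.symm v))} := by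
        ext u
        constructor
        · rintro ⟨hadj, hlt⟩
          refine ⟨f.symm u, ⟨hlt, ?_⟩, f.apply_symm_apply u⟩
          rw [f.apply_symm_apply, f.apply_symm_apply]
          exact hadj
        · rintro ⟨j, ⟨hlt, hadj⟩, rfl⟩
          rw [f.apply_symm_apply] at hadj
          refine ⟨hadj, ?_⟩
          rwa [f.symm_apply_apply]
      rw [himg, Set.ncard_image_of_injective _ f.injective]
    have hiff := hf (f.symm v)
    rw [f.apply_symm_apply] at hiff
    constructor
    · intro hvT
      rw [hdeq]
      exact hiff.mp hvT
    · intro hvT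
      rw [hdeq]
      rw [← Nat.not_odd_iff_even]
      exact fun ho => hvT (hiff.mpr ho)

end TOddAux

open TOddAux in
theorem stmt6 [Fintype V] (G : SimpleGraph V) (h : DualCritical G) :
    ∀ T : Set V, T ≠ Set.univ → T.ncard % 2 = G.edgeSet.ncard % 2 →
      ∃ r : V → V → Prop, IsOrientation G r ∧ AcyclicRel r ∧ TOdd r T := by
  intro T hT hpar
  obtain ⟨n, e, he⟩ := exists_goodOrd G h
  have hn : 0 < n := by
    rcases h with ⟨r, -, -, s, -⟩
    have hcard : Fintype.card V = n := by
      rw [← Fintype.card_fin n]; exact (Fintype.card_congr e.symm)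
    have : 0 < Fintype.card V := Fintype.card_pos_iff.mpr ⟨s⟩
    omega
  have hE := edge_parity G e he hn
  obtain ⟨f, hf⟩ := core n G e he T hT (by omega)
  exact realizes_toOrientation G f T hf
end

section
/- Subdividing an edge of a multigraph by inserting a new vertex of degree 2 in its middle preserves dual-criticality in both directions. -/
variable {V : Type*}

/-- Dual-criticality of a loopless multigraph given by an edge multiplicity function:
there is an enumeration of all vertices such that every vertex except the first is joined
to its predecessors by an odd number of edges (counted with multiplicity). -/
def MDualCritical (m : V → V → ℕ) : Prop :=
  ∃ (n : ℕ) (e : Fin n ≃ V), ∀ i : Fin n, 0 < i.val →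
    Odd (∑ j ∈ Finset.Iio i, m (e j) (e i))

/-- The multigraph obtained from `m` by subdividing one of the edges between `a` and `b`
with a new vertex (`none`) of degree 2. -/
def subdiv [DecidableEq V] (m : V → V → ℕ) (a b : V) : Option V → Option V → ℕ
  | some u, some v => if (u = a ∧ v = b) ∨ (u = b ∧ v = a) then m u v - 1 else m u v
  | some u, none => if u = a ∨ u = b then 1 else 0
  | none, some v => if v = a ∨ v = b then 1 else 0
  | none, none => 0


private lemma subdiv_comm [DecidableEq V] (m : V → V → ℕ) (a b : V) :
    subdiv m a b = subdiv m b a := by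
  funext x y
  cases x <;> cases y <;> simp [subdiv, or_comm]

private lemma sum_Iio_succAbove {n : ℕ} (p : Fin (n + 1)) (i : Fin n) (f : Fin (n + 1) → ℕ) :
    ∑ j' ∈ Finset.Iio (p.succAbove i), f j'
      = (if p ≤ i.castSucc then f p else 0) + ∑ j ∈ Finset.Iio i, f (p.succAbove j) := by
  have hinj : ∀ x ∈ Finset.Iio i, ∀ y ∈ Finset.Iio i,
      p.succAbove x = p.succAbove y → x = y :=
    fun x _ y _ hxy => Fin.succAbove_right_injective hxy
  rcases lt_or_ge i.castSucc p with h | h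
  · have hset : Finset.Iio (Fin.castSucc i) = (Finset.Iio i).image p.succAbove := by
      ext j'
      simp only [Finset.mem_Iio, Finset.mem_image]
      constructor
      · intro hj'
        have hne : j' ≠ p := ne_of_lt (hj'.trans h)
        obtain ⟨j, rfl⟩ := Fin.exists_succAbove_eq hne
        rw [← Fin.succAbove_of_castSucc_lt p i h] at hj'
        exact ⟨j, Fin.succAbove_lt_succAbove_iff.1 hj', rfl⟩
      · rintro ⟨j, hj, rfl⟩
        have := (Fin.strictMono_succAbove p) hj
        rwa [Fin.succAbove_of_castSucc_lt p i h] at this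
    rw [if_neg h.not_ge, zero_add, Fin.succAbove_of_castSucc_lt p i h, hset,
      Finset.sum_image hinj]
  · have hp : p ∉ (Finset.Iio i).image p.succAbove := by
      simp only [Finset.mem_image, not_exists]
      rintro j ⟨_, hj⟩
      exact Fin.succAbove_ne p j hj
    have hset : Finset.Iio (Fin.succ i) = insert p ((Finset.Iio i).image p.succAbove) := by
      ext j'
      simp only [Finset.mem_Iio, Finset.mem_insert, Finset.mem_image]
      constructor
      · intro hj'
        rcases eq_or_ne j' p with rfl | hne
        · exact Or.inl rfl
        · obtain ⟨j, rfl⟩ := Fin.exists_succAbove_eq hne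
          rw [← Fin.succAbove_of_le_castSucc p i h] at hj'
          exact Or.inr ⟨j, Fin.succAbove_lt_succAbove_iff.1 hj', rfl⟩
      · rintro (rfl | ⟨j, hj, rfl⟩)
        · exact h.trans_lt (Fin.castSucc_lt_succ (i := i))
        · have := (Fin.strictMono_succAbove p) hj
          rwa [Fin.succAbove_of_le_castSucc p i h] at this
    rw [if_pos h, Fin.succAbove_of_le_castSucc p i h, hset, Finset.sum_insert hp,
      Finset.sum_image hinj]

private lemma forward_aux [DecidableEq V] (m : V → V → ℕ)
    (a b : V) (hab : a ≠ b) (hedge : 1 ≤ m a b)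
    {n : ℕ} (e : Fin n ≃ V)
    (he : ∀ i : Fin n, 0 < i.val → Odd (∑ j ∈ Finset.Iio i, m (e j) (e i)))
    (hlt : e.symm a < e.symm b) :
    MDualCritical (subdiv m a b) := by
  set qa := e.symm a with hqa
  set q0 := e.symm b with hq0
  set q : Fin (n + 1) := q0.castSucc with hq
  set e' : Fin (n + 1) ≃ Option V := (finSuccEquiv' q).trans (Equiv.optionCongr e) with he'
  have hq_none : e' q = none := by simp [he', finSuccEquiv'_at]
  have hsome : ∀ j : Fin n, e' (q.succAbove j) = some (e j) := by
    intro j; simp [he', finSuccEquiv'_succAbove]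
  have hea : e qa = a := e.apply_symm_apply a
  have heb : e q0 = b := e.apply_symm_apply b
  refine ⟨n + 1, e', ?_⟩
  intro i' hi'
  rcases eq_or_ne i' q with rfl | hne
  · rw [hq_none]
    have hset : Finset.Iio q = (Finset.Iio q0).image Fin.castSucc := by
      ext j'
      simp only [Finset.mem_Iio, Finset.mem_image, hq]
      constructor
      · intro hj'
        have hv : j'.val < q0.val := by simpa [Fin.lt_def] using hj'
        exact ⟨⟨j'.val, hv.trans q0.isLt⟩, by simpa [Fin.lt_def] using hv,
          Fin.ext (by simp)⟩
      · rintro ⟨j, hj, rfl⟩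
        exact Fin.castSucc_lt_castSucc_iff.2 hj
    rw [hset, Finset.sum_image (fun x _ y _ hxy => Fin.castSucc_injective n hxy)]
    have hterm : ∀ j ∈ Finset.Iio q0,
        subdiv m a b (e' j.castSucc) none = if j = qa then 1 else 0 := by
      intro j hj
      have hjq : j < q0 := Finset.mem_Iio.1 hj
      have hcast : e' j.castSucc = some (e j) := by
        rw [← Fin.succAbove_of_castSucc_lt q j
          (by rw [hq]; exact Fin.castSucc_lt_castSucc_iff.2 hjq)]
        exact hsome j
      rw [hcast]
      by_cases hja : j = qa
      · subst hja
        simp [subdiv, hea]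
      · have h1 : e j ≠ a := fun hh => hja (by rw [hqa, ← hh, Equiv.symm_apply_apply])
        have h2 : e j ≠ b := fun hh => hjq.ne (by rw [hq0, ← hh, Equiv.symm_apply_apply])
        simp [subdiv, h1, h2, hja]
    rw [Finset.sum_congr rfl hterm, Finset.sum_ite_eq' (Finset.Iio q0) qa (fun _ => 1),
      if_pos (Finset.mem_Iio.2 hlt)]
    exact odd_one
  · obtain ⟨i, rfl⟩ := Fin.exists_succAbove_eq hne
    rw [hsome i, sum_Iio_succAbove]
    rcases lt_or_ge i.castSucc q with h | h
    · have hiq : i < q0 := by rwa [hq, Fin.castSucc_lt_castSucc_iff] at h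
      rw [if_neg h.not_ge, zero_add]
      have hipos : 0 < i.val := by
        have h2 := hi'
        rw [Fin.succAbove_of_castSucc_lt _ _ h] at h2
        simpa using h2
      have hterm : ∀ j ∈ Finset.Iio i,
          subdiv m a b (e' (q.succAbove j)) (some (e i)) = m (e j) (e i) := by
        intro j hj
        have hji : j < i := Finset.mem_Iio.1 hj
        rw [hsome j]
        have h2 : e i ≠ b := fun hh => hiq.ne (by rw [hq0, ← hh, Equiv.symm_apply_apply])
        have h3 : e j ≠ b := fun hh =>
          (hji.trans hiq).ne (by rw [hq0, ← hh, Equiv.symm_apply_apply])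
        have hcond : ¬ ((e j = a ∧ e i = b) ∨ (e j = b ∧ e i = a)) := by
          rintro (⟨_, hh⟩ | ⟨hh, _⟩); exacts [h2 hh, h3 hh]
        simp only [subdiv]; rw [if_neg hcond]
      rw [Finset.sum_congr rfl hterm]
      exact he i hipos
    · have hq0i : q0 ≤ i := by rwa [hq, Fin.castSucc_le_castSucc_iff] at h
      rw [if_pos h, hq_none]
      have hqaq0 : qa.val < q0.val := hlt
      rcases eq_or_ne i q0 with rfl | hne0
      · rw [heb]
        have hnone : subdiv m a b none (some b) = 1 := by simp [subdiv]
        have hmem : qa ∈ Finset.Iio q0 := Finset.mem_Iio.2 hlt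
        have hterm : ∀ j ∈ (Finset.Iio q0).erase qa,
            subdiv m a b (e' (q.succAbove j)) (some b) = m (e j) b := by
          intro j hj
          obtain ⟨hjne, hjlt⟩ := Finset.mem_erase.1 hj
          rw [hsome j]
          have h1 : e j ≠ a := fun hh => hjne (by rw [hqa, ← hh, Equiv.symm_apply_apply])
          simp [subdiv, h1, hab.symm]
        have hqaterm : subdiv m a b (e' (q.succAbove qa)) (some b) = m a b - 1 := by
          rw [hsome qa, hea]; simp [subdiv]
        rw [← Finset.add_sum_erase _ _ hmem, hqaterm, Finset.sum_congr rfl hterm, hnone]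
        have hhyp := he q0 (by omega)
        rw [heb, ← Finset.add_sum_erase _ _ hmem, hea] at hhyp
        have harith : 1 + (m a b - 1 + ∑ j ∈ (Finset.Iio q0).erase qa, m (e j) b)
            = m a b + ∑ j ∈ (Finset.Iio q0).erase qa, m (e j) b := by omega
        rw [harith]
        exact hhyp
      · have hilt : q0 < i := lt_of_le_of_ne hq0i (Ne.symm hne0)
        have h1 : e i ≠ a := fun hh =>
          (hlt.trans hilt).ne' (by rw [hqa, ← hh, Equiv.symm_apply_apply])
        have h2 : e i ≠ b := fun hh => hne0 (by rw [hq0, ← hh, Equiv.symm_apply_apply])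
        have hnone : subdiv m a b none (some (e i)) = 0 := by
          simp only [subdiv]; rw [if_neg]; rintro (hh | hh); exacts [h1 hh, h2 hh]
        rw [hnone, zero_add]
        have hterm : ∀ j ∈ Finset.Iio i,
            subdiv m a b (e' (q.succAbove j)) (some (e i)) = m (e j) (e i) := by
          intro j hj
          rw [hsome j]
          have hcond : ¬ ((e j = a ∧ e i = b) ∨ (e j = b ∧ e i = a)) := by
            rintro (⟨_, hh⟩ | ⟨_, hh⟩); exacts [h2 hh, h1 hh]
          simp only [subdiv]; rw [if_neg hcond]
        rw [Finset.sum_congr rfl hterm]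
        have : qa.val < i.val := hlt.trans hilt
        exact he i (by omega)

private lemma reverse_aux [DecidableEq V] (m : V → V → ℕ)
    (a b : V) (hab : a ≠ b) (hedge : 1 ≤ m a b)
    {n : ℕ} (e : Fin (n + 1) ≃ Option V)
    (he : ∀ i : Fin (n + 1), 0 < i.val →
      Odd (∑ j ∈ Finset.Iio i, subdiv m a b (e j) (e i)))
    (hlt : e.symm (some a) < e.symm (some b)) :
    MDualCritical m := by
  set p := e.symm none with hp
  set qa := e.symm (some a) with hqa
  set qb := e.symm (some b) with hqb
  have hep : e p = none := e.apply_symm_apply none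
  have heqa : e qa = some a := e.apply_symm_apply _
  have heqb : e qb = some b := e.apply_symm_apply _
  have hqaqb : qa ≠ qb := hlt.ne
  have hqap : qa ≠ p := fun h => by rw [h, hep] at heqa; simp at heqa
  have hqbp : qb ≠ p := fun h => by rw [h, hep] at heqb; simp at heqb
  set E : Option (Fin n) ≃ Option V := (finSuccEquiv' p).symm.trans e with hE
  set e' : Fin n ≃ V := E.removeNone with he'
  have key : ∀ j : Fin n, e (p.succAbove j) = some (e' j) := by
    intro j
    have h1 : E (some j) = e (p.succAbove j) := by
      simp [hE, finSuccEquiv'_symm_some]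
    have h2 : ∃ x, e (p.succAbove j) = some x := by
      rcases hx : e (p.succAbove j) with _ | x
      · exfalso
        have hpj : p.succAbove j = p := e.injective (by rw [hx, hep])
        exact Fin.succAbove_ne p j hpj
      · exact ⟨x, rfl⟩
    obtain ⟨x, hx⟩ := h2
    have h3 := Equiv.removeNone_some E ⟨x, h1.trans hx⟩
    rw [← he'] at h3
    exact (h3.trans h1).symm
  set qa' := e'.symm a with hqa'
  set qb' := e'.symm b with hqb'
  have hea' : e' qa' = a := e'.apply_symm_apply a
  have heb' : e' qb' = b := e'.apply_symm_apply b
  have hkeya : p.succAbove qa' = qa := e.injective (by rw [key, heqa, hea'])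
  have hkeyb : p.succAbove qb' = qb := e.injective (by rw [key, heqb, heb'])
  have hlt' : qa' < qb' := by
    have h := hlt
    rw [← hkeya, ← hkeyb] at h
    exact Fin.succAbove_lt_succAbove_iff.1 h
  have K1 : 0 < p.val → qa < p ∧ p < qb := by
    intro hppos
    have hodd := he p hppos
    have hterm : ∀ j ∈ Finset.Iio p, subdiv m a b (e j) (e p)
        = (if j = qa then 1 else 0) + (if j = qb then 1 else 0) := by
      intro j hj
      have hjp : j ≠ p := (Finset.mem_Iio.1 hj).ne
      rw [hep]
      by_cases hja : j = qa
      · subst hja; rw [heqa]; simp [subdiv, hqaqb]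
      · by_cases hjb : j = qb
        · subst hjb; rw [heqb]; simp [subdiv, hja]
        · rcases hx : e j with _ | x
          · exact absurd (e.injective (hx.trans hep.symm)) hjp
          · have h1 : x ≠ a := fun hh => hja (e.injective (by rw [hx, hh, heqa]))
            have h2 : x ≠ b := fun hh => hjb (e.injective (by rw [hx, hh, heqb]))
            simp [subdiv, h1, h2, hja, hjb]
    rw [Finset.sum_congr rfl hterm, Finset.sum_add_distrib,
      Finset.sum_ite_eq' (Finset.Iio p) qa (fun _ => 1),
      Finset.sum_ite_eq' (Finset.Iio p) qb (fun _ => 1)] at hodd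
    rw [Nat.odd_iff] at hodd
    by_cases h1 : qa ∈ Finset.Iio p
    · refine ⟨Finset.mem_Iio.1 h1, ?_⟩
      by_cases h2 : qb ∈ Finset.Iio p
      · rw [if_pos h1, if_pos h2] at hodd; omega
      · exact lt_of_le_of_ne (not_lt.1 (fun hc => h2 (Finset.mem_Iio.2 hc))) hqbp.symm
    · exfalso
      by_cases h2 : qb ∈ Finset.Iio p
      · exact h1 (Finset.mem_Iio.2 (hlt.trans (Finset.mem_Iio.1 h2)))
      · rw [if_neg h1, if_neg h2] at hodd; omega
  have K2 : p.val = 0 → qa'.val = 0 := by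
    intro hp0
    have hqa1 : qa.val = 1 := by
      by_contra hne1
      have h1lt : 1 < qa.val := by
        have h0 : 0 < qa.val := by
          rcases Nat.eq_zero_or_pos qa.val with h | h
          · exact absurd (Fin.ext (h.trans hp0.symm)) hqap
          · exact h
        omega
      set t : Fin (n + 1) := ⟨1, h1lt.trans qa.isLt⟩ with ht
      have hodd := he t (by simp [ht])
      have hIio : Finset.Iio t = {p} := by
        ext j
        simp only [Finset.mem_Iio, Finset.mem_singleton]
        constructor
        · intro hj
          have : j.val < 1 := hj
          exact Fin.ext (by omega)
        · rintro rfl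
          have : p.val < 1 := by omega
          exact this
      rw [hIio, Finset.sum_singleton, hep] at hodd
      have htp : t ≠ p := fun hh => by
        have := congrArg Fin.val hh
        simp [ht, hp0] at this
      rcases hx : e t with _ | x
      · exact absurd (e.injective (hx.trans hep.symm)) htp
      · rw [hx] at hodd
        have hxa : x ≠ a := by
          intro hh
          have h4 : t = qa := e.injective (by rw [hx, hh, heqa])
          have h5 := congrArg Fin.val h4
          simp [ht] at h5
          omega
        have hxb : x ≠ b := by
          intro hh
          have h4 : t = qb := e.injective (by rw [hx, hh, heqb])
          have h5 := congrArg Fin.val h4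
          have h6 : qa.val < qb.val := hlt
          simp [ht] at h5
          omega
        simp [subdiv, hxa, hxb] at hodd
    have hrw : qa.val = qa'.val + 1 := by
      rw [← hkeya, Fin.succAbove_of_le_castSucc p qa' (by
        rw [Fin.le_def]
        simp [hp0])]
      simp
    omega
  refine ⟨n, e', ?_⟩
  intro i hi
  have hpos : 0 < (p.succAbove i).val := by
    rcases lt_or_ge i.castSucc p with h | h
    · rw [Fin.succAbove_of_castSucc_lt _ _ h]; simpa using hi
    · rw [Fin.succAbove_of_le_castSucc _ _ h]; simp
  have spec := he (p.succAbove i) hpos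
  rw [key i, sum_Iio_succAbove, hep] at spec
  by_cases hib : i = qb'
  · subst hib
    rw [heb'] at spec
    have hple : p ≤ qb'.castSucc := by
      rcases lt_or_ge qb'.castSucc p with h | h
      · exfalso
        have hpq : p < qb := by
          rcases Nat.eq_zero_or_pos p.val with h0 | h0
          · exact lt_of_le_of_ne (Fin.le_def.2 (by omega)) hqbp.symm
          · exact (K1 h0).2
        rw [← hkeyb, Fin.succAbove_of_castSucc_lt _ _ h] at hpq
        exact absurd (hpq.trans h) (lt_irrefl p)
      · exact h
    rw [if_pos hple] at spec
    have hnone : subdiv m a b none (some b) = 1 := by simp [subdiv]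
    rw [hnone] at spec
    have hmem : qa' ∈ Finset.Iio qb' := Finset.mem_Iio.2 hlt'
    have hterm : ∀ j ∈ (Finset.Iio qb').erase qa',
        subdiv m a b (e (p.succAbove j)) (some b) = m (e' j) b := by
      intro j hj
      obtain ⟨hjne, _⟩ := Finset.mem_erase.1 hj
      rw [key j]
      have h1 : e' j ≠ a := fun hh => hjne (by rw [hqa', ← hh, Equiv.symm_apply_apply])
      simp [subdiv, h1, hab.symm]
    have hqaterm : subdiv m a b (e (p.succAbove qa')) (some b) = m a b - 1 := by
      rw [key qa', hea']; simp [subdiv]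
    rw [← Finset.add_sum_erase _ _ hmem, hqaterm, Finset.sum_congr rfl hterm] at spec
    rw [heb', ← Finset.add_sum_erase _ _ hmem, hea']
    have harith : m a b + ∑ j ∈ (Finset.Iio qb').erase qa', m (e' j) b
        = 1 + (m a b - 1 + ∑ j ∈ (Finset.Iio qb').erase qa', m (e' j) b) := by omega
    rw [harith]
    exact spec
  · by_cases hia : i = qa'
    · subst hia
      rw [hea'] at spec
      have hcs : qa'.castSucc < p := by
        rcases lt_or_ge qa'.castSucc p with h | h
        · exact h
        · exfalso
          rcases Nat.eq_zero_or_pos p.val with h0 | h0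
          · have := K2 h0; omega
          · have hqalt := (K1 h0).1
            rw [← hkeya, Fin.succAbove_of_le_castSucc _ _ h] at hqalt
            have h5 := h.trans_lt (Fin.castSucc_lt_succ (i := qa'))
            exact absurd (h5.trans hqalt) (lt_irrefl p)
      rw [if_neg (not_le.2 hcs), zero_add] at spec
      have hterm : ∀ j ∈ Finset.Iio qa',
          subdiv m a b (e (p.succAbove j)) (some a) = m (e' j) a := by
        intro j hj
        have hjlt : j < qa' := Finset.mem_Iio.1 hj
        rw [key j]
        have h2 : e' j ≠ b := fun hh =>
          (hjlt.trans hlt').ne (by rw [hqb', ← hh, Equiv.symm_apply_apply])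
        simp [subdiv, hab, h2]
      rw [Finset.sum_congr rfl hterm] at spec
      rw [hea']
      exact spec
    · have h1 : e' i ≠ a := fun hh => hia (by rw [hqa', ← hh, Equiv.symm_apply_apply])
      have h2 : e' i ≠ b := fun hh => hib (by rw [hqb', ← hh, Equiv.symm_apply_apply])
      have hnone : subdiv m a b none (some (e' i)) = 0 := by
        simp only [subdiv]; rw [if_neg]; rintro (hh | hh); exacts [h1 hh, h2 hh]
      rw [hnone, ite_self, zero_add] at spec
      have hterm : ∀ j ∈ Finset.Iio i,
          subdiv m a b (e (p.succAbove j)) (some (e' i)) = m (e' j) (e' i) := by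
        intro j hj
        rw [key j]
        have hcond : ¬ ((e' j = a ∧ e' i = b) ∨ (e' j = b ∧ e' i = a)) := by
          rintro (⟨_, hh⟩ | ⟨_, hh⟩); exacts [h2 hh, h1 hh]
        simp only [subdiv]; rw [if_neg hcond]
      rw [Finset.sum_congr rfl hterm] at spec
      exact spec

theorem stmt8 [DecidableEq V] (m : V → V → ℕ)
    (hsymm : ∀ u v, m u v = m v u) (hloopless : ∀ v, m v v = 0)
    (a b : V) (hab : a ≠ b) (hedge : 1 ≤ m a b) :
    MDualCritical m ↔ MDualCritical (subdiv m a b) := by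
  constructor
  · rintro ⟨n, e, he⟩
    have hne : e.symm a ≠ e.symm b := fun h => hab (by
      have h2 := congrArg e h
      simpa using h2)
    rcases hne.lt_or_gt with h | h
    · exact forward_aux m a b hab hedge e he h
    · rw [subdiv_comm m a b]
      exact forward_aux m b a hab.symm (by rw [hsymm b a]; exact hedge) e he h
  · rintro ⟨N, e, he⟩
    cases N with
    | zero => exact (e.symm none).elim0
    | succ n =>
      have hne : e.symm (some a) ≠ e.symm (some b) := fun h => hab (by
        have h2 := congrArg e h
        simpa using h2)
      rcases hne.lt_or_gt with h | h
      · exact reverse_aux m a b hab hedge e he h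
      · refine reverse_aux m b a hab.symm (by rw [hsymm b a]; exact hedge) e ?_ h
        simpa only [← subdiv_comm m a b] using he
end

section
/- A connected graph G satisfies maxdc(G) = 1 (i.e., G is 1-dual-critical but not 2-dual-critical) if and only if G is Eulerian (every vertex has even degree). -/
variable {V : Type*}

open Finset
open scoped Classical

lemma cut_eq_card [Fintype V] (G : SimpleGraph V) (A B : Set V) :
    cut G A B = (Finset.univ.filter fun p : V × V => p.1 ∈ A ∧ p.2 ∈ B ∧ G.Adj p.1 p.2).card := by
  classical
  rw [cut, ← Set.ncard_coe_finset]
  congr 1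
  ext p
  simp

lemma even_within [Fintype V] (G : SimpleGraph V) (A : Set V) :
    Even ((Finset.univ.filter fun p : V × V => p.1 ∈ A ∧ p.2 ∈ A ∧ G.Adj p.1 p.2).card) := by
  classical
  let H : SimpleGraph V :=
    { Adj := fun u v => u ∈ A ∧ v ∈ A ∧ G.Adj u v
      symm := ⟨fun u v ⟨h1, h2, h3⟩ => ⟨h2, h1, h3.symm⟩⟩
      loopless := ⟨fun v ⟨_, _, h⟩ => G.loopless.irrefl v h⟩ }
  have := H.two_mul_card_edgeFinset
  refine ⟨#H.edgeFinset, ?_⟩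
  rw [← two_mul, this]

lemma even_cut_compl [Fintype V] (G : SimpleGraph V)
    (hE : ∀ v : V, Even ((G.neighborSet v).ncard)) (A : Set V) :
    Even (cut G Aᶜ A) := by
  classical
  have hdeg : ∀ v : V, (G.neighborSet v).ncard
      = (Finset.univ.filter fun u => G.Adj u v).card := by
    intro v
    rw [← Set.ncard_coe_finset]
    congr 1
    ext u
    simp [G.adj_comm]
  have hT : Even ((Finset.univ.filter fun p : V × V => p.2 ∈ A ∧ G.Adj p.1 p.2).card) := by
    rw [Finset.card_filter, Fintype.sum_prod_type, Finset.sum_comm]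
    apply Finset.even_sum
    intro v _
    by_cases hv : v ∈ A
    · have : ∀ u : V, (if v ∈ A ∧ G.Adj u v then (1:ℕ) else 0)
          = if G.Adj u v then 1 else 0 := by
        intro u; simp [hv]
      rw [Finset.sum_congr rfl fun u _ => this u, ← Finset.card_filter, ← hdeg v]
      exact hE v
    · simp [hv]
  have hsplit : (Finset.univ.filter fun p : V × V => p.1 ∈ A ∧ p.2 ∈ A ∧ G.Adj p.1 p.2).card
      + (Finset.univ.filter fun p : V × V => p.1 ∈ Aᶜ ∧ p.2 ∈ A ∧ G.Adj p.1 p.2).card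
      = (Finset.univ.filter fun p : V × V => p.2 ∈ A ∧ G.Adj p.1 p.2).card := by
    have e1 : (Finset.univ.filter fun p : V × V => p.1 ∈ A ∧ p.2 ∈ A ∧ G.Adj p.1 p.2)
        = (Finset.univ.filter fun p : V × V => p.2 ∈ A ∧ G.Adj p.1 p.2).filter
          (fun p => p.1 ∈ A) := by
      ext p; simp; tauto
    have e2 : (Finset.univ.filter fun p : V × V => p.1 ∈ Aᶜ ∧ p.2 ∈ A ∧ G.Adj p.1 p.2)
        = (Finset.univ.filter fun p : V × V => p.2 ∈ A ∧ G.Adj p.1 p.2).filter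
          (fun p => ¬ p.1 ∈ A) := by
      ext p; simp; tauto
    rw [e1, e2]
    exact Finset.card_filter_add_card_filter_not (fun p : V × V => p.1 ∈ A)
  have hY : Even ((Finset.univ.filter fun p : V × V => p.1 ∈ Aᶜ ∧ p.2 ∈ A ∧ G.Adj p.1 p.2).card) := by
    have h2 : Even ((Finset.univ.filter fun p : V × V => p.1 ∈ A ∧ p.2 ∈ A ∧ G.Adj p.1 p.2).card
      + (Finset.univ.filter fun p : V × V => p.1 ∈ Aᶜ ∧ p.2 ∈ A ∧ G.Adj p.1 p.2).card) :=
      hsplit ▸ hT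
    exact (Nat.even_add.mp h2).mp (even_within G A)
  rw [cut_eq_card]
  convert hY using 2
  ext p
  simp







lemma kdc_one (G : SimpleGraph V) [Nonempty V] : KDualCritical G 1 := by
  refine ⟨fun _ => Set.univ, fun _ => Set.univ_nonempty, ?_, by simp [Set.iUnion_const], ?_⟩
  · intro i j hij
    exact absurd (Subsingleton.elim i j) hij
  · intro i hi
    omega

lemma kdc_le (G : SimpleGraph V) [Fintype V] {k : ℕ} (h : KDualCritical G k) :
    k ≤ Fintype.card V := by
  obtain ⟨P, hne, hdis, -, -⟩ := h
  choose f hf using hne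
  have hinj : Function.Injective f := by
    intro i j hij
    by_contra hne'
    exact Set.disjoint_left.mp (hdis hne') (hf i) (hij ▸ hf j)
  simpa using Fintype.card_le_of_injective f hinj

lemma cut_single (G : SimpleGraph V) (v : V) :
    cut G ({v}ᶜ : Set V) {v} = (G.neighborSet v).ncard := by
  have himg : {p : V × V | p.1 ∈ ({v}ᶜ : Set V) ∧ p.2 ∈ ({v} : Set V) ∧ G.Adj p.1 p.2}
      = (fun u => (u, v)) '' (G.neighborSet v) := by
    ext ⟨a, b⟩
    constructor
    · rintro ⟨-, hb, hadj⟩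
      simp only [Set.mem_singleton_iff] at hb
      subst hb
      exact ⟨a, hadj.symm, rfl⟩
    · rintro ⟨u, hu, huv⟩
      obtain ⟨rfl, rfl⟩ := Prod.mk.injEq .. ▸ huv
      exact ⟨fun h => G.loopless.irrefl v (Set.mem_singleton_iff.mp h ▸ hu),
        rfl, (G.mem_neighborSet v u).mp hu |>.symm⟩
  rw [cut, himg, Set.ncard_image_of_injective _ (fun a b h => (Prod.mk.injEq .. ▸ h).1)]

lemma kdc_two (G : SimpleGraph V) {v u : V} (huv : u ≠ v)
    (hodd : Odd ((G.neighborSet v).ncard)) : KDualCritical G 2 := by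
  refine ⟨![{v}ᶜ, {v}], ?_, ?_, ?_, ?_⟩
  · intro i
    fin_cases i
    · exact ⟨u, huv⟩
    · exact ⟨v, rfl⟩
  · intro i j hij
    fin_cases i <;> fin_cases j <;>
      simp only [Function.onFun, Fin.isValue, Matrix.cons_val_zero, Matrix.cons_val_one,
        Matrix.head_cons] <;>
      first
        | exact absurd rfl hij
        | exact disjoint_compl_left
        | exact disjoint_compl_right
  · apply Set.eq_univ_of_univ_subset
    intro x _
    by_cases hx : x = v
    · exact Set.mem_iUnion.mpr ⟨1, by simp [hx]⟩
    · exact Set.mem_iUnion.mpr ⟨0, by simp [hx]⟩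
  · intro i hi
    have hi1 : i = 1 := by omega
    subst hi1
    have hU : (⋃ j ∈ {j : Fin 2 | j < 1}, (![{v}ᶜ, {v}] : Fin 2 → Set V) j)
        = ({v}ᶜ : Set V) := by
      have : {j : Fin 2 | j < 1} = {0} := by
        ext j
        fin_cases j <;> simp
      rw [this]
      simp
    rw [hU]
    simpa [cut_single] using hodd

lemma kdc_last (G : SimpleGraph V) {k : ℕ} (hk : 2 ≤ k) (h : KDualCritical G k) :
    ∃ A : Set V, Odd (cut G Aᶜ A) := by
  obtain ⟨P, hne, hdis, huniv, hcut⟩ := h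
  set i : Fin k := ⟨k - 1, by omega⟩ with hi
  refine ⟨P i, ?_⟩
  have hU : (⋃ j ∈ {j : Fin k | j < i}, P j) = (P i)ᶜ := by
    ext x
    simp only [Set.mem_iUnion, Set.mem_setOf_eq, Set.mem_compl_iff]
    constructor
    · rintro ⟨j, hj, hx⟩
      exact fun hxi => Set.disjoint_left.mp (hdis (ne_of_lt hj)) hx hxi
    · intro hx
      have : x ∈ ⋃ j, P j := huniv ▸ Set.mem_univ x
      obtain ⟨j, hj⟩ := Set.mem_iUnion.mp this
      refine ⟨j, ?_, hj⟩
      have hne' : j ≠ i := fun hji => hx (hji ▸ hj)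
      have h1 : j.val < k := j.isLt
      have h2 : j.val ≠ k - 1 := fun hv => hne' (Fin.ext hv)
      refine Fin.lt_def.mpr ?_
      have hival : i.val = k - 1 := rfl
      omega
  rw [← hU]
  refine hcut i ?_
  have hival : i.val = k - 1 := rfl
  omega

theorem stmt15 [Fintype V] (G : SimpleGraph V) (hconn : G.Connected) :
    maxdc G = 1 ↔ ∀ v : V, Even (G.neighborSet v).ncard := by
  have hne : Nonempty V := hconn.nonempty
  have h1 : KDualCritical G 1 := kdc_one G
  have hbdd : BddAbove {k | KDualCritical G k} := ⟨Fintype.card V, fun k hk => kdc_le G hk⟩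
  constructor
  · intro hmax v
    by_contra hv
    rw [Nat.not_even_iff_odd] at hv
    obtain ⟨u, hu⟩ : (G.neighborSet v).Nonempty := by
      rw [← Set.ncard_pos (Set.toFinite _)]
      exact hv.pos
    have huv : u ≠ v := fun h => G.loopless.irrefl v (h ▸ (G.mem_neighborSet v u).mp hu)
    have h2 : KDualCritical G 2 := kdc_two G huv hv
    have : 2 ≤ maxdc G := le_csSup hbdd h2
    omega
  · intro hE
    refine le_antisymm ?_ (le_csSup hbdd h1)
    have hmem : (1:ℕ) ∈ {k | KDualCritical G k} := h1
    apply csSup_le ⟨1, hmem⟩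
    intro k hk
    by_contra hk1
    obtain ⟨A, hA⟩ := kdc_last G (by omega) hk
    exact (Nat.not_even_iff_odd.mpr hA) (even_cut_compl G hE A)
end
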